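/- arXiv:2307.02611 — 6 statements merged into one kernel-verified Lean document; each statement's English description precedes it below -/
import Mathlib

section
/- Let S : [0,∞) → M_d(ℝ) be a continuous family of real d×d matrices with S_0 equal to the identity matrix, and let f : [0,∞) × ℝ^d → ℂ be jointly continuous with f_t(0) = 1 for every t ≥ 0. Assume that for all s, t ≥ 0 and all ξ ∈ ℝ^d one has f_{t+s}(ξ) = f_s(S_t ξ) · f_t(ξ), and that S_{t+s} ξ = S_s (S_t ξ) whenever f_{t+s}(ξ) ≠ 0. Then there exists a real d×d matrix Z such that S_t = exp(tZ) for all t ≥ 0. -/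
open MeasureTheory Matrix Filter ComplexOrder

/-- The matrix semigroup `S_t = exp (t Z)` generated by a real `d × d` matrix `Z`. -/
noncomputable def expm {d : ℕ} (Z : Matrix (Fin d) (Fin d) ℝ) (t : ℝ) :
    Matrix (Fin d) (Fin d) ℝ :=
  NormedSpace.exp (t • Z)

/-- The Euclidean norm on `ℝ^d`. -/
noncomputable def eucNorm {d : ℕ} (x : Fin d → ℝ) : ℝ :=
  Real.sqrt (∑ i, x i ^ 2)

/-- The characteristic function of a measure on `ℝ^d`. -/
noncomputable def charFun {d : ℕ} (μ : Measure (Fin d → ℝ)) (ξ : Fin d → ℝ) : ℂ :=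
  ∫ x, Complex.exp (Complex.I * ((x ⬝ᵥ ξ : ℝ) : ℂ)) ∂μ

/-- Convolution of two measures on `ℝ^d`. -/
noncomputable def mconv {d : ℕ} (μ ρ : Measure (Fin d → ℝ)) : Measure (Fin d → ℝ) :=
  (μ.prod ρ).map fun p => p.1 + p.2

/-- The `m`-fold convolution power of a measure on `ℝ^d`. -/
noncomputable def convPow {d : ℕ} (ρ : Measure (Fin d → ℝ)) : ℕ → Measure (Fin d → ℝ)
  | 0 => Measure.dirac 0
  | n + 1 => mconv ρ (convPow ρ n)

/-- A probability measure on `ℝ^d` is infinitely divisible if for every `m ≥ 1` it is an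
`m`-fold convolution power of some probability measure. -/
def InfinitelyDivisible {d : ℕ} (μ : Measure (Fin d → ℝ)) : Prop :=
  ∀ m : ℕ, 1 ≤ m → ∃ ρ : Measure (Fin d → ℝ), IsProbabilityMeasure ρ ∧ convPow ρ m = μ

/-- `g : ℝ^d → ℂ` is twisted positive definite with respect to the antisymmetric form `Δ`. -/
def TwistedPosDef {d : ℕ} (Δ : Matrix (Fin d) (Fin d) ℝ) (g : (Fin d → ℝ) → ℂ) : Prop :=
  ∀ (N : ℕ) (ξ : Fin N → (Fin d → ℝ)) (c : Fin N → ℂ),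
    0 ≤ ∑ k : Fin N, ∑ l : Fin N, (starRingEnd ℂ) (c k) * g (ξ l - ξ k) *
      Complex.exp (Complex.I / 2 * (((ξ k) ⬝ᵥ (Δ.mulVec (ξ l)) : ℝ) : ℂ)) * c l

/-- A Lévy measure on `ℝ^d`. -/
def IsLevyMeasure {d : ℕ} (ν : Measure (Fin d → ℝ)) : Prop :=
  ν {0} = 0 ∧
  (∫⁻ η in {η : Fin d → ℝ | eucNorm η < 1}, ENNReal.ofReal (eucNorm η ^ 2) ∂ν) < ⊤ ∧
  ν {η : Fin d → ℝ | 1 ≤ eucNorm η} < ⊤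

/-- The Lévy symbol associated to a generating triplet `(A, ν, α)`. -/
noncomputable def levySymbol {d : ℕ} (α : Fin d → ℝ) (A : Matrix (Fin d) (Fin d) ℝ)
    (ν : Measure (Fin d → ℝ)) (ξ : Fin d → ℝ) : ℂ :=
  Complex.I * ((α ⬝ᵥ ξ : ℝ) : ℂ) - (1 / 2 : ℂ) * ((ξ ⬝ᵥ (A.mulVec ξ) : ℝ) : ℂ) +
    ∫ η, (Complex.exp (Complex.I * ((η ⬝ᵥ ξ : ℝ) : ℂ)) - 1 -
      Complex.I * ((({η : Fin d → ℝ | eucNorm η < 1}).indicator (fun η' => η' ⬝ᵥ ξ) η : ℝ) : ℂ)) ∂ν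

/-- `Ψ` admits the Lévy–Khinchine representation with generating triplet `(A, ν, α)`. -/
def HasTriplet {d : ℕ} (Ψ : (Fin d → ℝ) → ℂ) (A : Matrix (Fin d) (Fin d) ℝ)
    (ν : Measure (Fin d → ℝ)) (α : Fin d → ℝ) : Prop :=
  A.IsSymm ∧ A.PosSemidef ∧ ν {0} = 0 ∧
  (∫⁻ η, ENNReal.ofReal (min (eucNorm η ^ 2) 1) ∂ν) < ⊤ ∧
  ∀ ξ, Ψ ξ = levySymbol α A ν ξ

section Aux

open intervalIntegral Set in
theorem semigroup_is_exp {A : Type*} [NormedRing A] [NormedAlgebra ℝ A] [CompleteSpace A]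
    (g : ℝ → A) (hcont : ContinuousOn g (Set.Ici 0)) (hg0 : g 0 = 1)
    (hmul : ∀ s t : ℝ, 0 ≤ s → 0 ≤ t → g (t + s) = g s * g t) :
    ∃ z : A, ∀ t : ℝ, 0 ≤ t → g t = NormedSpace.exp (t • z) := by
  classical
  -- extend g continuously to all of ℝ
  set G : ℝ → A := fun t => g (max t 0) with hGdef
  have hGc : Continuous G :=
    hcont.comp_continuous (continuous_id.max continuous_const) fun t => Set.mem_Ici.mpr (le_max_right _ _)
  have hGeq : ∀ t : ℝ, 0 ≤ t → G t = g t := fun t ht => by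
    simp only [hGdef, max_eq_left ht]
  have hint : ∀ a b : ℝ, IntervalIntegrable G volume a b := fun a b =>
    hGc.intervalIntegrable a b
  -- choose ε with ‖G u - 1‖ ≤ 1/2 on [0, ε]
  have hG0 : G 0 = 1 := by rw [hGeq 0 le_rfl, hg0]
  obtain ⟨δ, δpos, hδ⟩ := Metric.continuousAt_iff.mp hGc.continuousAt (1/2) (by norm_num)
  set ε : ℝ := δ / 2 with hεdef
  have hεpos : 0 < ε := by positivity
  have hbound : ∀ u ∈ Set.Icc (0:ℝ) ε, ‖G u - 1‖ ≤ 1/2 := by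
    intro u hu
    have hud : dist u 0 < δ := by
      rw [Real.dist_eq, sub_zero, abs_of_nonneg hu.1]
      calc u ≤ ε := hu.2
        _ < δ := by rw [hεdef]; linarith
    have := hδ hud
    rw [hG0, dist_eq_norm] at this
    exact this.le
  set V : A := ∫ u in (0:ℝ)..ε, G u with hVdef
  -- V is close to ε • 1, so ε⁻¹ • V is a unit
  have hVnorm : ‖V - ε • 1‖ ≤ 1/2 * ε := by
    have h1 : (∫ _ in (0:ℝ)..ε, (1:A)) = ε • 1 := by simp
    rw [hVdef, ← h1, ← intervalIntegral.integral_sub (hint 0 ε) intervalIntegrable_const]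
    have := intervalIntegral.norm_integral_le_of_norm_le_const (C := 1/2)
      (f := fun u => G u - 1) (a := 0) (b := ε) (fun x hx => by
        rw [Set.uIoc_of_le hεpos.le] at hx
        exact hbound x ⟨hx.1.le, hx.2⟩)
    simpa [abs_of_nonneg hεpos.le] using this
  have hunit : ‖(1 : A) - ε⁻¹ • V‖ < 1 := by
    have he1 : (1 : A) - ε⁻¹ • V = ε⁻¹ • (ε • 1 - V) := by
      rw [smul_sub, smul_smul, inv_mul_cancel₀ hεpos.ne', one_smul]
    rw [he1, norm_smul, norm_inv, Real.norm_eq_abs, abs_of_nonneg hεpos.le, norm_sub_rev]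
    calc ε⁻¹ * ‖V - ε • 1‖ ≤ ε⁻¹ * (1/2 * ε) := by
          exact mul_le_mul_of_nonneg_left hVnorm (by positivity)
      _ = 1/2 := by field_simp
      _ < 1 := by norm_num
  set w : Aˣ := Units.oneSub ((1 : A) - ε⁻¹ • V) hunit with hwdef
  have hwval : (w : A) = ε⁻¹ • V := by
    rw [hwdef, Units.val_oneSub, sub_sub_cancel]
  -- elements g t commute with each other and with V
  have hgg : ∀ t u : ℝ, 0 ≤ t → 0 ≤ u → g t * g u = g u * g t := by
    intro t u ht hu
    rw [← hmul t u ht hu, ← hmul u t hu ht, add_comm]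
  have hmulV : ∀ t : ℝ, 0 ≤ t → g t * V = ∫ u in (0:ℝ)..ε, g t * G u := fun t ht =>
    ((ContinuousLinearMap.mul ℝ A (g t)).intervalIntegral_comp_comm (hint 0 ε)).symm
  have hVmul : ∀ t : ℝ, 0 ≤ t → V * g t = ∫ u in (0:ℝ)..ε, G u * g t := fun t ht =>
    (((ContinuousLinearMap.mul ℝ A).flip (g t)).intervalIntegral_comp_comm (hint 0 ε)).symm
  have hcomm : ∀ t : ℝ, 0 ≤ t → g t * V = V * g t := by
    intro t ht
    rw [hmulV t ht, hVmul t ht]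
    refine intervalIntegral.integral_congr fun u hu => ?_
    rw [Set.uIcc_of_le hεpos.le] at hu
    rw [hGeq u hu.1, hgg t u ht hu.1]
  have hcommw : ∀ t : ℝ, 0 ≤ t → Commute (g t) (↑w⁻¹ : A) := by
    intro t ht
    refine Commute.units_inv_right ?_
    show g t * (w : A) = (w : A) * g t
    rw [hwval, mul_smul_comm, smul_mul_assoc, hcomm t ht]
  -- the shifted integral
  set J : ℝ → A := fun t => ∫ u in t..(t + ε), G u with hJdef
  have hshift : ∀ t : ℝ, 0 ≤ t → g t * V = J t := by
    intro t ht
    rw [hmulV t ht]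
    have h1 : ∀ u ∈ Set.uIcc (0:ℝ) ε, g t * G u = G (u + t) := by
      intro u hu
      rw [Set.uIcc_of_le hεpos.le] at hu
      rw [hGeq u hu.1, hGeq (u + t) (by linarith [hu.1]), hmul t u ht hu.1]
    rw [intervalIntegral.integral_congr h1, intervalIntegral.integral_comp_add_right _ t,
      zero_add, add_comm ε t]
  have hgJ : ∀ t : ℝ, 0 ≤ t → g t = (ε⁻¹ • J t) * ↑w⁻¹ := by
    intro t ht
    have : g t * (w : A) = ε⁻¹ • J t := by
      rw [hwval, mul_smul_comm, hshift t ht]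
    rw [← this, Units.mul_inv_cancel_right]
  -- J is differentiable
  have hJ' : ∀ t : ℝ, HasDerivAt J (G (t + ε) - G t) t := by
    intro t
    have hmeas : StronglyMeasurableAtFilter G (nhds t) :=
      hGc.stronglyMeasurable.stronglyMeasurableAtFilter
    have h₁ : HasDerivAt (fun s => ∫ u in (0:ℝ)..s, G u) (G t) t :=
      intervalIntegral.integral_hasDerivAt_right (hint 0 t)
        hGc.stronglyMeasurable.stronglyMeasurableAtFilter hGc.continuousAt
    have h₂' : HasDerivAt (fun s => ∫ u in (0:ℝ)..s, G u) (G (t + ε)) (t + ε) :=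
      intervalIntegral.integral_hasDerivAt_right (hint 0 (t + ε))
        hGc.stronglyMeasurable.stronglyMeasurableAtFilter hGc.continuousAt
    have hin : HasDerivAt (fun s : ℝ => s + ε) 1 t := (hasDerivAt_id t).add_const ε
    have h₂ : HasDerivAt (fun s => ∫ u in (0:ℝ)..(s + ε), G u) (G (t + ε)) t := by
      have := HasDerivAt.scomp t h₂' hin
      simp only [one_smul] at this
      exact this
    have hJeq : J = fun s => (∫ u in (0:ℝ)..(s + ε), G u) - ∫ u in (0:ℝ)..s, G u := by
      funext s
      rw [hJdef]
      exact (intervalIntegral.integral_interval_sub_left (hint 0 (s + ε)) (hint 0 s)).symm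
    rw [hJeq]
    exact h₂.sub h₁
  -- the candidate generator
  set z : A := (ε⁻¹ • (g ε - 1)) * ↑w⁻¹ with hzdef
  set gE : ℝ → A := fun t => (ε⁻¹ • J t) * ↑w⁻¹ with hgEdef
  have hgE' : ∀ t : ℝ, HasDerivAt gE ((ε⁻¹ • (G (t + ε) - G t)) * ↑w⁻¹) t := fun t =>
    ((hJ' t).const_smul ε⁻¹).mul_const _
  have hgEg : ∀ t : ℝ, 0 ≤ t → gE t = g t := fun t ht => (hgJ t ht).symm
  have hderiv : ∀ t : ℝ, 0 ≤ t → HasDerivAt gE (z * gE t) t := by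
    intro t ht
    have hkey : (ε⁻¹ • (G (t + ε) - G t)) * ↑w⁻¹ = z * gE t := by
      have h1 : G (t + ε) - G t = (g ε - 1) * g t := by
        rw [hGeq (t + ε) (by linarith), hGeq t ht, hmul ε t hεpos.le ht, sub_mul, one_mul]
      rw [hgEg t ht, h1, hzdef]
      calc (ε⁻¹ • ((g ε - 1) * g t)) * ↑w⁻¹
          = (ε⁻¹ • (g ε - 1)) * (g t * ↑w⁻¹) := by
            rw [smul_mul_assoc, smul_mul_assoc, mul_assoc]
        _ = (ε⁻¹ • (g ε - 1)) * (↑w⁻¹ * g t) := by rw [(hcommw t ht).eq]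
        _ = (ε⁻¹ • (g ε - 1)) * ↑w⁻¹ * g t := by rw [mul_assoc]
    rw [← hkey]
    exact hgE' t
  -- comparison with the exponential via ODE uniqueness
  refine ⟨z, fun t ht => ?_⟩
  have hlip : ∀ s : ℝ, LipschitzWith ‖ContinuousLinearMap.mul ℝ A z‖₊
      (fun x : A => z * x) := by
    intro s
    have := (ContinuousLinearMap.mul ℝ A z).lipschitz
    exact this
  have hgEcont : Continuous gE := by
    refine continuous_iff_continuousAt.mpr fun s => (hgE' s).continuousAt
  have hecont : Continuous (fun s : ℝ => NormedSpace.exp (s • z)) := by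
    refine continuous_iff_continuousAt.mpr fun s => (hasDerivAt_exp_smul_const' z s).continuousAt
  have heq : Set.EqOn gE (fun s : ℝ => NormedSpace.exp (s • z)) (Set.Icc 0 t) := by
    refine ODE_solution_unique (v := fun _ x => z * x) hlip
      (hgEcont.continuousOn) (fun s hs => ((hderiv s hs.1).hasDerivWithinAt))
      (hecont.continuousOn) (fun s hs => ?_) ?_
    · exact (hasDerivAt_exp_smul_const' z s).hasDerivWithinAt
    · rw [hgEg 0 le_rfl, hg0]
      simp [NormedSpace.exp_zero]
  rw [← hgEg t ht]
  exact heq ⟨le_rfl.trans ht, le_rfl⟩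

attribute [local instance] Matrix.linftyOpNormedRing Matrix.linftyOpNormedAlgebra

/-- a continuous family of matrices `S_t` compatible with a noise function `f_t`
(with `f_t(0) = 1`, the product formula, and the composition law wherever `f` does not vanish)
is necessarily a matrix exponential semigroup. -/
theorem stmt0 (d : ℕ) (hd : 0 < d)
    (S : ℝ → Matrix (Fin d) (Fin d) ℝ) (f : ℝ → (Fin d → ℝ) → ℂ)
    (hScont : ContinuousOn S (Set.Ici 0))
    (hS0 : S 0 = 1)
    (hfcont : ContinuousOn (fun p : ℝ × (Fin d → ℝ) => f p.1 p.2) {p | 0 ≤ p.1})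
    (hfnorm : ∀ t : ℝ, 0 ≤ t → f t 0 = 1)
    (hprod : ∀ s t : ℝ, 0 ≤ s → 0 ≤ t → ∀ ξ : Fin d → ℝ,
      f (t + s) ξ = f s ((S t).mulVec ξ) * f t ξ)
    (hcomp : ∀ s t : ℝ, 0 ≤ s → 0 ≤ t → ∀ ξ : Fin d → ℝ, f (t + s) ξ ≠ 0 →
      (S (t + s)).mulVec ξ = (S s).mulVec ((S t).mulVec ξ)) :
    ∃ Z : Matrix (Fin d) (Fin d) ℝ, ∀ t : ℝ, 0 ≤ t → S t = expm Z t := by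
  haveI : CompleteSpace (Matrix (Fin d) (Fin d) ℝ) := FiniteDimensional.complete ℝ _
  -- Step 1: the semigroup law for S
  have hSmul : ∀ s t : ℝ, 0 ≤ s → 0 ≤ t → S (t + s) = S s * S t := by
    intro s t hs ht
    have hts : (0:ℝ) ≤ t + s := add_nonneg ht hs
    have hc : Continuous fun ξ : Fin d → ℝ => f (t + s) ξ :=
      hfcont.comp_continuous (continuous_const.prodMk continuous_id) fun ξ => hts
    have hU : IsOpen {ξ : Fin d → ℝ | f (t + s) ξ ≠ 0} := isOpen_ne.preimage hc
    have h0U : (0 : Fin d → ℝ) ∈ {ξ : Fin d → ℝ | f (t + s) ξ ≠ 0} := by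
      simp only [Set.mem_setOf_eq, hfnorm _ hts]
      exact one_ne_zero
    obtain ⟨δ, δpos, hball⟩ := Metric.isOpen_iff.mp hU 0 h0U
    have hmv : ∀ ξ : Fin d → ℝ, (S (t + s)).mulVec ξ = (S s * S t).mulVec ξ := by
      intro ξ
      rcases eq_or_ne ξ 0 with rfl | hξ
      · simp
      · have hξn : 0 < ‖ξ‖ := norm_pos_iff.mpr hξ
        set c : ℝ := δ / (2 * ‖ξ‖) with hcdef
        have hcpos : 0 < c := by positivity
        have hmem : c • ξ ∈ Metric.ball (0 : Fin d → ℝ) δ := by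
          rw [Metric.mem_ball, dist_zero_right, norm_smul, Real.norm_eq_abs,
            abs_of_nonneg hcpos.le]
          have hce : c * ‖ξ‖ = δ / 2 := by rw [hcdef]; field_simp
          rw [hce]; linarith
        have hne : f (t + s) (c • ξ) ≠ 0 := hball hmem
        have hkey := hcomp s t hs ht (c • ξ) hne
        rw [Matrix.mulVec_mulVec] at hkey
        rw [Matrix.mulVec_smul, Matrix.mulVec_smul] at hkey
        exact smul_right_injective _ hcpos.ne' hkey
    have hlin : Matrix.toLin' (S (t + s)) = Matrix.toLin' (S s * S t) :=
      LinearMap.ext fun ξ => by simpa [Matrix.toLin'_apply] using hmv ξ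
    exact Matrix.toLin'.injective hlin
  obtain ⟨z, hz⟩ := semigroup_is_exp S hScont hS0 hSmul
  exact ⟨z, fun t ht => (hz t ht).trans rfl⟩

end Aux
end

section
/- Let Z be a real d×d matrix, σ a real antisymmetric d×d matrix, t ≥ 0, and ξ, η ∈ ℝ^d. Then the limit as m → ∞ of the product ∏_{l=1}^{m} cos( (1/2) · (exp(((l−1)t/m)Z) ξ)ᵀ · (σ − exp((t/m)Zᵀ) σ exp((t/m)Z)) · exp(((l−1)t/m)Z) η ) equals 1. -/
open MeasureTheory Matrix Filter ComplexOrder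

attribute [local instance] Matrix.linftyOpNormedRing Matrix.linftyOpNormedAlgebra

section Aux

variable {𝔸 : Type*} [NormedRing 𝔸] [NormedAlgebra ℝ 𝔸] [CompleteSpace 𝔸] [NormOneClass 𝔸]

set_option linter.unusedSectionVars false in
lemma my_norm_exp_le (a : 𝔸) : ‖NormedSpace.exp a‖ ≤ Real.exp ‖a‖ := by
  rw [NormedSpace.exp_eq_tsum ℝ]
  refine le_trans (norm_tsum_le_tsum_norm (NormedSpace.norm_expSeries_summable' a)) ?_
  rw [Real.exp_eq_exp_ℝ, NormedSpace.exp_eq_tsum ℝ]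
  refine Summable.tsum_le_tsum (fun n => ?_) (NormedSpace.norm_expSeries_summable' a)
    (NormedSpace.expSeries_summable' (𝕂 := ℝ) ‖a‖)
  rw [norm_smul, smul_eq_mul, norm_inv, Real.norm_natCast]
  gcongr
  exact norm_pow_le _ _

lemma my_norm_exp_sub_one_le (a : 𝔸) :
    ‖NormedSpace.exp a - 1‖ ≤ ‖a‖ * Real.exp ‖a‖ := by
  have hsum := NormedSpace.expSeries_summable' (𝕂 := ℝ) a
  have hns := NormedSpace.norm_expSeries_summable' (𝕂 := ℝ) a
  have hns' : Summable fun n : ℕ => ‖(((n + 1).factorial : ℝ))⁻¹ • a ^ (n + 1)‖ :=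
    hns.comp_injective Nat.succ_injective
  have h0 : NormedSpace.exp a - 1 = ∑' n : ℕ, (((n + 1).factorial : ℝ))⁻¹ • a ^ (n + 1) := by
    rw [NormedSpace.exp_eq_tsum ℝ]
    beta_reduce
    rw [Summable.tsum_eq_zero_add hsum]
    simp
  rw [h0]
  have hrs : Summable fun n : ℕ => ‖a‖ * (((n.factorial : ℝ))⁻¹ • ‖a‖ ^ n) :=
    (NormedSpace.expSeries_summable' (𝕂 := ℝ) ‖a‖).mul_left ‖a‖
  refine le_trans (norm_tsum_le_tsum_norm hns') ?_
  have hterm : ∀ n : ℕ, ‖(((n + 1).factorial : ℝ))⁻¹ • a ^ (n + 1)‖ ≤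
      ‖a‖ * (((n.factorial : ℝ))⁻¹ • ‖a‖ ^ n) := by
    intro n
    rw [norm_smul, smul_eq_mul, norm_inv, Real.norm_natCast]
    calc (((n + 1).factorial : ℝ))⁻¹ * ‖a ^ (n + 1)‖ ≤ ((n.factorial : ℝ))⁻¹ * ‖a‖ ^ (n + 1) := by
          refine mul_le_mul ?_ (norm_pow_le _ _) (norm_nonneg _) (by positivity)
          exact inv_anti₀ (by exact_mod_cast Nat.factorial_pos n)
            (by exact_mod_cast Nat.factorial_le (Nat.le_succ n))
      _ = ‖a‖ * ((n.factorial : ℝ)⁻¹ * ‖a‖ ^ n) := by rw [pow_succ]; ring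
  refine le_trans (Summable.tsum_le_tsum hterm hns' hrs) ?_
  rw [tsum_mul_left, Real.exp_eq_exp_ℝ, NormedSpace.exp_eq_tsum ℝ]

end Aux

lemma my_dot_bound {d : ℕ} (x y : Fin d → ℝ) : |x ⬝ᵥ y| ≤ d * ‖x‖ * ‖y‖ := by
  calc |∑ i, x i * y i| ≤ ∑ i, |x i * y i| := Finset.abs_sum_le_sum_abs _ _
    _ ≤ ∑ i : Fin d, ‖x‖ * ‖y‖ := by
        refine Finset.sum_le_sum fun i _ => ?_
        rw [abs_mul]
        exact mul_le_mul (norm_le_pi_norm x i) (norm_le_pi_norm y i) (abs_nonneg _) (norm_nonneg _)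
    _ = d * ‖x‖ * ‖y‖ := by simp [mul_assoc]

lemma my_abs_cos_sub_one_le (x : ℝ) : |Real.cos x - 1| ≤ x ^ 2 / 2 := by
  have h : Real.cos x = 1 - 2 * Real.sin (x / 2) ^ 2 := by
    have h2 := Real.cos_two_mul (x / 2)
    rw [show 2 * (x / 2) = x by ring] at h2
    rw [h2, Real.cos_sq']; ring
  have hs : Real.sin (x / 2) ^ 2 ≤ (x / 2) ^ 2 := by
    calc Real.sin (x / 2) ^ 2 = |Real.sin (x / 2)| ^ 2 := (sq_abs _).symm
      _ ≤ |x / 2| ^ 2 := pow_le_pow_left₀ (abs_nonneg _) Real.abs_sin_le_abs 2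
      _ = (x / 2) ^ 2 := sq_abs _
  rw [abs_sub_comm, abs_of_nonneg (by linarith [Real.cos_le_one x])]
  nlinarith

lemma my_prod_sub_one_le (a : ℕ → ℝ) (m : ℕ) (h : ∀ i, |a i| ≤ 1) :
    |∏ i ∈ Finset.range m, a i - 1| ≤ ∑ i ∈ Finset.range m, |a i - 1| := by
  induction m with
  | zero => simp
  | succ n ih =>
    rw [Finset.prod_range_succ, Finset.sum_range_succ]
    calc |(∏ i ∈ Finset.range n, a i) * a n - 1|
        = |a n * ((∏ i ∈ Finset.range n, a i) - 1) + (a n - 1)| := by ring_nf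
      _ ≤ |a n * ((∏ i ∈ Finset.range n, a i) - 1)| + |a n - 1| := abs_add_le _ _
      _ ≤ 1 * |(∏ i ∈ Finset.range n, a i) - 1| + |a n - 1| := by
            rw [abs_mul]; gcongr; exact h n
      _ ≤ (∑ i ∈ Finset.range n, |a i - 1|) + |a n - 1| := by
            rw [one_mul]; gcongr


set_option maxHeartbeats 1000000 in
/-- the product of the twisting cosines converges to `1` as `m → ∞`. -/
theorem stmt2 (d : ℕ) (hd : 0 < d) (Z σ : Matrix (Fin d) (Fin d) ℝ) (hσ : σᵀ = -σ)
    (t : ℝ) (ht : 0 ≤ t) (ξ η : Fin d → ℝ) :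
    Tendsto (fun m : ℕ => ∏ l ∈ Finset.range m,
        Real.cos ((1 / 2) *
          (((expm Z ((l : ℝ) * t / (m : ℝ))).mulVec ξ) ⬝ᵥ
            ((σ - (expm Zᵀ (t / (m : ℝ))) * σ * (expm Z (t / (m : ℝ)))).mulVec
              ((expm Z ((l : ℝ) * t / (m : ℝ))).mulVec η)))))
      atTop (nhds 1) := by
  haveI : Nonempty (Fin d) := Fin.pos_iff_nonempty.mp hd
  set K := Real.exp (t * ‖Z‖) with hK
  set K' := Real.exp (t * ‖Zᵀ‖) with hK'
  have hK0 : 0 < K := Real.exp_pos _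
  have hK0' : 0 < K' := Real.exp_pos _
  have hexp : ∀ (W : Matrix (Fin d) (Fin d) ℝ) (u : ℝ), 0 ≤ u → u ≤ t →
      ‖expm W u‖ ≤ Real.exp (t * ‖W‖) := by
    intro W u hu hut
    refine (my_norm_exp_le _).trans ?_
    apply Real.exp_le_exp.mpr
    rw [norm_smul, Real.norm_eq_abs, abs_of_nonneg hu]
    exact mul_le_mul_of_nonneg_right hut (norm_nonneg _)
  have hexp1 : ∀ (W : Matrix (Fin d) (Fin d) ℝ) (u : ℝ), 0 ≤ u → u ≤ t →
      ‖expm W u - 1‖ ≤ u * ‖W‖ * Real.exp (t * ‖W‖) := by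
    intro W u hu hut
    refine (my_norm_exp_sub_one_le _).trans ?_
    rw [norm_smul, Real.norm_eq_abs, abs_of_nonneg hu]
    have h1 : u * ‖W‖ ≤ t * ‖W‖ := mul_le_mul_of_nonneg_right hut (norm_nonneg _)
    have h2 := Real.exp_le_exp.mpr h1
    have h3 := Real.exp_pos (u * ‖W‖)
    nlinarith [norm_nonneg W, mul_nonneg hu (norm_nonneg W)]
  set C₀ : ℝ := ‖Zᵀ‖ * K' * ‖σ‖ + K' * ‖σ‖ * (‖Z‖ * K) with hC₀
  have hC₀0 : 0 ≤ C₀ := by positivity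
  have hF : ∀ u : ℝ, 0 ≤ u → u ≤ t →
      ‖σ - expm Zᵀ u * σ * expm Z u‖ ≤ u * C₀ := by
    intro u hu hut
    have hid : σ - expm Zᵀ u * σ * expm Z u
        = (1 - expm Zᵀ u) * σ + expm Zᵀ u * σ * (1 - expm Z u) := by noncomm_ring
    have e1 : ‖1 - expm Zᵀ u‖ ≤ u * ‖Zᵀ‖ * K' := by
      rw [norm_sub_rev]; exact hexp1 Zᵀ u hu hut
    have e2 : ‖1 - expm Z u‖ ≤ u * ‖Z‖ * K := by
      rw [norm_sub_rev]; exact hexp1 Z u hu hut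
    have e3 : ‖expm Zᵀ u‖ ≤ K' := hexp Zᵀ u hu hut
    rw [hid]
    calc ‖(1 - expm Zᵀ u) * σ + expm Zᵀ u * σ * (1 - expm Z u)‖
        ≤ ‖(1 - expm Zᵀ u) * σ‖ + ‖expm Zᵀ u * σ * (1 - expm Z u)‖ := norm_add_le _ _
      _ ≤ ‖1 - expm Zᵀ u‖ * ‖σ‖ + ‖expm Zᵀ u‖ * ‖σ‖ * ‖1 - expm Z u‖ := by
          refine add_le_add (norm_mul_le _ _) ?_
          refine (norm_mul_le _ _).trans ?_
          exact mul_le_mul_of_nonneg_right (norm_mul_le _ _) (norm_nonneg _)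
      _ ≤ (u * ‖Zᵀ‖ * K') * ‖σ‖ + K' * ‖σ‖ * (u * ‖Z‖ * K) := by
          refine add_le_add (mul_le_mul_of_nonneg_right e1 (norm_nonneg σ)) ?_
          refine mul_le_mul (mul_le_mul_of_nonneg_right e3 (norm_nonneg σ)) e2
            (norm_nonneg _) (by positivity)
      _ = u * C₀ := by rw [hC₀]; ring
  set C : ℝ := (d : ℝ) * (K * ‖ξ‖) * (t * C₀ * (K * ‖η‖)) with hC
  have hC0 : 0 ≤ C := by positivity
  set x : ℕ → ℕ → ℝ := fun m l => (1 / 2) *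
      (((expm Z ((l : ℝ) * t / (m : ℝ))).mulVec ξ) ⬝ᵥ
        ((σ - (expm Zᵀ (t / (m : ℝ))) * σ * (expm Z (t / (m : ℝ)))).mulVec
          ((expm Z ((l : ℝ) * t / (m : ℝ))).mulVec η))) with hx
  have harg : ∀ m : ℕ, 1 ≤ m → ∀ l : ℕ, l < m → |x m l| ≤ C / m := by
    intro m hm l hl
    have hm0 : (0 : ℝ) < m := by exact_mod_cast hm
    have hu0 : 0 ≤ (l : ℝ) * t / m := by positivity
    have hut : (l : ℝ) * t / m ≤ t := by
      rw [div_le_iff₀ hm0]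
      have hlm : (l : ℝ) ≤ m := by exact_mod_cast hl.le
      nlinarith
    have hs0 : 0 ≤ t / (m : ℝ) := by positivity
    have hst : t / (m : ℝ) ≤ t := div_le_self ht (by exact_mod_cast hm)
    have hv : ‖(expm Z ((l : ℝ) * t / m)).mulVec ξ‖ ≤ K * ‖ξ‖ :=
      (Matrix.linfty_opNorm_mulVec _ _).trans
        (mul_le_mul_of_nonneg_right (hexp Z _ hu0 hut) (norm_nonneg ξ))
    have hw : ‖(expm Z ((l : ℝ) * t / m)).mulVec η‖ ≤ K * ‖η‖ :=
      (Matrix.linfty_opNorm_mulVec _ _).trans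
        (mul_le_mul_of_nonneg_right (hexp Z _ hu0 hut) (norm_nonneg η))
    have hFw : ‖(σ - expm Zᵀ (t / m) * σ * expm Z (t / m)).mulVec
        ((expm Z ((l : ℝ) * t / m)).mulVec η)‖ ≤ (t / m * C₀) * (K * ‖η‖) :=
      (Matrix.linfty_opNorm_mulVec _ _).trans
        (mul_le_mul (hF _ hs0 hst) hw (norm_nonneg _) (by positivity))
    have hdot := my_dot_bound ((expm Z ((l : ℝ) * t / m)).mulVec ξ)
      ((σ - expm Zᵀ (t / m) * σ * expm Z (t / m)).mulVec
        ((expm Z ((l : ℝ) * t / m)).mulVec η))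
    have hchain : |x m l| ≤ (1 / 2) * ((d : ℝ) * (K * ‖ξ‖) * ((t / m * C₀) * (K * ‖η‖))) := by
      rw [hx]
      simp only [abs_mul]
      rw [abs_of_nonneg (by norm_num : (0:ℝ) ≤ (1:ℝ)/2)]
      refine mul_le_mul_of_nonneg_left ?_ (by norm_num)
      refine hdot.trans ?_
      have hn : (0:ℝ) ≤ (d:ℝ) := by positivity
      refine mul_le_mul (mul_le_mul_of_nonneg_left hv hn) hFw (norm_nonneg _) ?_
      positivity
    refine hchain.trans ?_
    rw [hC, le_div_iff₀ hm0]
    have hA : 0 ≤ (d:ℝ) * (K * ‖ξ‖) * (t * C₀ * (K * ‖η‖)) := by positivity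
    have h2 : (1:ℝ)/2 * ((d:ℝ) * (K * ‖ξ‖) * (t / m * C₀ * (K * ‖η‖))) * m
        = ((d:ℝ) * (K * ‖ξ‖) * (t * C₀ * (K * ‖η‖))) / 2 := by
      field_simp
    rw [h2]
    set A := (d:ℝ) * (K * ‖ξ‖) * (t * C₀ * (K * ‖η‖)) with hAdef
    linarith
  -- final squeeze
  rw [← tendsto_sub_nhds_zero_iff]
  refine squeeze_zero_norm' (f := fun m : ℕ => (∏ l ∈ Finset.range m, Real.cos (x m l)) - 1)
    ?_ (tendsto_const_div_atTop_nhds_zero_nat (C ^ 2 / 2))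
  filter_upwards [eventually_ge_atTop 1] with m hm
  have hm0 : (0 : ℝ) < m := by exact_mod_cast hm
  have hb1 : |(∏ l ∈ Finset.range m, Real.cos (x m l)) - 1| ≤
      ∑ l ∈ Finset.range m, |Real.cos (x m l) - 1| :=
    my_prod_sub_one_le _ m (fun i => Real.abs_cos_le_one _)
  have hb2 : ∑ l ∈ Finset.range m, |Real.cos (x m l) - 1| ≤
      ∑ l ∈ Finset.range m, (C / m) ^ 2 / 2 := by
    refine Finset.sum_le_sum fun l hli => ?_
    refine (my_abs_cos_sub_one_le _).trans ?_
    have h1 : |x m l| ≤ C / m := harg m hm l (Finset.mem_range.mp hli)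
    have : (x m l) ^ 2 ≤ (C / m) ^ 2 := by
      rw [← sq_abs (x m l)]
      exact pow_le_pow_left₀ (abs_nonneg _) h1 2
    linarith
  have hb3 : ∑ l ∈ Finset.range m, ((C / m) ^ 2 / 2 : ℝ) = C ^ 2 / 2 / m := by
    rw [Finset.sum_const, Finset.card_range, nsmul_eq_mul]
    field_simp
  calc ‖(∏ l ∈ Finset.range m, Real.cos (x m l)) - 1‖
      = |(∏ l ∈ Finset.range m, Real.cos (x m l)) - 1| := rfl
    _ ≤ ∑ l ∈ Finset.range m, |Real.cos (x m l) - 1| := hb1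
    _ ≤ ∑ l ∈ Finset.range m, (C / m) ^ 2 / 2 := hb2
    _ = C ^ 2 / 2 / m := hb3
end

section
/- Let Z be a real d×d matrix, set S_t := exp(tZ), and let σ be a real antisymmetric d×d matrix. Let f : [0,∞) × ℝ^d → ℂ be jointly continuous with f_0(ξ) = 1 and f_t(0) = 1 for all t ≥ 0, ξ ∈ ℝ^d, satisfying the product formula f_{t+s}(ξ) = f_s(S_t ξ) · f_t(ξ) for all s,t ≥ 0 and ξ ∈ ℝ^d. Assume that for every t ≥ 0 the function f_t is twisted positive definite with respect to the antisymmetric matrix σ − S_tᵀ σ S_t. Then for every t ≥ 0 the function f_t is positive definite: for every N, all ξ¹,…,ξᴺ ∈ ℝ^d, and all c ∈ ℂ^N, the sum ∑_{k,l=1}^N conj(c_k) · f_t(ξ^l − ξ^k) · c_l is a nonnegative real number. -/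
open MeasureTheory Matrix Filter ComplexOrder

/-! ### Auxiliary material for the proof of Statement 3 -/

open scoped Topology

section Stmt3Aux

/-- A matrix whose associated sesquilinear form is (complex-)nonnegative and which is
entrywise hermitian is positive semidefinite. -/
private lemma posSemidef_of_qf {N : ℕ} (M : Matrix (Fin N) (Fin N) ℂ)
    (hherm : ∀ k l, (starRingEnd ℂ) (M l k) = M k l)
    (hq : ∀ c : Fin N → ℂ, 0 ≤ ∑ k, ∑ l, (starRingEnd ℂ) (c k) * M k l * c l) :
    M.PosSemidef := by
  refine Matrix.PosSemidef.of_dotProduct_mulVec_nonneg ?_ ?_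
  · ext k l
    simpa [Matrix.conjTranspose_apply, RCLike.star_def] using hherm k l
  · intro x
    have h : dotProduct (star x) (M *ᵥ x)
        = ∑ k, ∑ l, (starRingEnd ℂ) (x k) * M k l * x l := by
      simp only [dotProduct, mulVec, Pi.star_apply, RCLike.star_def, Finset.mul_sum]
      exact Finset.sum_congr rfl fun k _ => Finset.sum_congr rfl fun l _ => by ring
    rw [h]; exact hq x

/-- Schur product positivity at the level of quadratic forms. -/
private lemma schur_step {N : ℕ} (M W : Matrix (Fin N) (Fin N) ℂ)
    (hM : M.PosSemidef)
    (hW : ∀ c : Fin N → ℂ, 0 ≤ ∑ k, ∑ l, (starRingEnd ℂ) (c k) * W k l * c l) :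
    ∀ c : Fin N → ℂ, 0 ≤ ∑ k, ∑ l, (starRingEnd ℂ) (c k) * (M k l * W k l) * c l := by
  intro c
  obtain ⟨B, rfl⟩ : ∃ B : Matrix (Fin N) (Fin N) ℂ, M = Bᴴ * B := by
    open scoped MatrixOrder Matrix.Norms.L2Operator in
    exact CStarAlgebra.nonneg_iff_eq_star_mul_self.mp hM.nonneg
  have h1 : ∀ k l, (starRingEnd ℂ) (c k) * ((Bᴴ * B) k l * W k l) * c l
      = ∑ r, (starRingEnd ℂ) (c k * B r k) * W k l * (c l * B r l) := by
    intro k l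
    rw [Matrix.mul_apply]
    simp only [Matrix.conjTranspose_apply, RCLike.star_def]
    rw [Finset.sum_mul, Finset.mul_sum, Finset.sum_mul]
    exact Finset.sum_congr rfl fun r _ => by
      simp only [map_mul (starRingEnd ℂ)]; ring
  calc ∑ k, ∑ l, (starRingEnd ℂ) (c k) * ((Bᴴ * B) k l * W k l) * c l
      = ∑ k, ∑ l, ∑ r, (starRingEnd ℂ) (c k * B r k) * W k l * (c l * B r l) :=
        Finset.sum_congr rfl fun k _ => Finset.sum_congr rfl fun l _ => h1 k l
    _ = ∑ k, ∑ r, ∑ l, (starRingEnd ℂ) (c k * B r k) * W k l * (c l * B r l) :=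
        Finset.sum_congr rfl fun k _ => Finset.sum_comm
    _ = ∑ r, ∑ k, ∑ l, (starRingEnd ℂ) (c k * B r k) * W k l * (c l * B r l) :=
        Finset.sum_comm
    _ ≥ 0 := Finset.sum_nonneg fun r _ => hW fun k => c k * B r k

private lemma skew_dot {d : ℕ} {Δ : Matrix (Fin d) (Fin d) ℝ} (h : Δᵀ = -Δ) (x y : Fin d → ℝ) :
    x ⬝ᵥ Δ *ᵥ y = -(y ⬝ᵥ Δ *ᵥ x) := by
  rw [dotProduct_mulVec, dotProduct_comm, ← mulVec_transpose, h, neg_mulVec, dotProduct_neg]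

private lemma skew_diag {d : ℕ} {Δ : Matrix (Fin d) (Fin d) ℝ} (h : Δᵀ = -Δ) (x : Fin d → ℝ) :
    x ⬝ᵥ Δ *ᵥ x = 0 := by
  have h2 := skew_dot h x x; linarith

/-- A twisted positive definite function is hermitian. -/
private lemma herm_of_twisted {d : ℕ} {Δ : Matrix (Fin d) (Fin d) ℝ} (hΔ : Δᵀ = -Δ)
    {g : (Fin d → ℝ) → ℂ} (hg : TwistedPosDef Δ g) (hg0 : g 0 = 1) (ζ : Fin d → ℝ) :
    g (-ζ) = (starRingEnd ℂ) (g ζ) := by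
  have h1 := hg 2 ![0, ζ] ![1, 1]
  have h2 := hg 2 ![0, ζ] ![1, Complex.I]
  simp only [Fin.sum_univ_two, Matrix.cons_val_zero, Matrix.cons_val_one, Matrix.head_cons,
    sub_self, sub_zero, zero_sub, hg0, zero_dotProduct, mulVec_zero, dotProduct_zero,
    skew_diag hΔ, Complex.ofReal_zero, mul_zero, Complex.exp_zero, _root_.map_one, one_mul,
    mul_one, neg_zero, Complex.conj_I, Complex.le_def, Complex.add_re, Complex.add_im,
    Complex.one_re, Complex.one_im, Complex.mul_re, Complex.mul_im, Complex.I_re, Complex.I_im,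
    Complex.neg_re, Complex.neg_im, Complex.zero_re, Complex.zero_im] at h1 h2
  obtain ⟨-, e1⟩ := h1
  obtain ⟨-, e2⟩ := h2
  apply Complex.ext
  · simp only [Complex.conj_re]; linarith
  · simp only [Complex.conj_im]; linarith

private lemma conj_g {d : ℕ} {Δ : Matrix (Fin d) (Fin d) ℝ} (hΔ : Δᵀ = -Δ)
    {g : (Fin d → ℝ) → ℂ} (hg : TwistedPosDef Δ g) (hg0 : g 0 = 1) (a b : Fin d → ℝ) :
    (starRingEnd ℂ) (g (a - b)) = g (b - a) := by
  have h := herm_of_twisted hΔ hg hg0 (a - b)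
  rw [neg_sub] at h
  exact h.symm

/-- The `+`-twisted matrix of a twisted positive definite function is PSD. -/
private lemma twisted_psd_plus {d : ℕ} {Δ : Matrix (Fin d) (Fin d) ℝ}
    {g : (Fin d → ℝ) → ℂ} (hΔ : Δᵀ = -Δ) (hg : TwistedPosDef Δ g) (hg0 : g 0 = 1)
    {N : ℕ} (ξ : Fin N → (Fin d → ℝ)) :
    Matrix.PosSemidef (Matrix.of fun k l : Fin N => g (ξ l - ξ k) *
      Complex.exp (Complex.I / 2 * ((ξ k ⬝ᵥ Δ *ᵥ ξ l : ℝ) : ℂ))) := by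
  apply posSemidef_of_qf
  · intro k l
    simp only [Matrix.of_apply, _root_.map_mul]
    rw [conj_g hΔ hg hg0, ← Complex.exp_conj]
    congr 1
    rw [skew_dot hΔ (ξ l) (ξ k)]
    simp only [_root_.map_mul, map_div₀, Complex.conj_I, Complex.conj_ofReal,
      Complex.ofReal_neg, map_ofNat, map_neg]
    ring
  · intro c
    refine le_trans (hg N ξ c) (le_of_eq ?_)
    exact Finset.sum_congr rfl fun k _ => Finset.sum_congr rfl fun l _ => by
      simp only [Matrix.of_apply]; ring

/-- The `-`-twisted matrix of a twisted positive definite function is PSD. -/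
private lemma twisted_psd_minus {d : ℕ} {Δ : Matrix (Fin d) (Fin d) ℝ}
    {g : (Fin d → ℝ) → ℂ} (hΔ : Δᵀ = -Δ) (hg : TwistedPosDef Δ g) (hg0 : g 0 = 1)
    {N : ℕ} (ξ : Fin N → (Fin d → ℝ)) :
    Matrix.PosSemidef (Matrix.of fun k l : Fin N => g (ξ l - ξ k) *
      Complex.exp (-(Complex.I / 2) * ((ξ k ⬝ᵥ Δ *ᵥ ξ l : ℝ) : ℂ))) := by
  apply posSemidef_of_qf
  · intro k l
    simp only [Matrix.of_apply, _root_.map_mul]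
    rw [conj_g hΔ hg hg0, ← Complex.exp_conj]
    congr 1
    rw [skew_dot hΔ (ξ l) (ξ k)]
    simp only [_root_.map_mul, map_div₀, Complex.conj_I, Complex.conj_ofReal,
      Complex.ofReal_neg, map_ofNat, map_neg]
    ring
  · intro c
    have h0 := hg N (fun k => -ξ k) (star c)
    simp only [Pi.star_apply, RCLike.star_def, Complex.conj_conj] at h0
    have harg : ∀ k l : Fin N, -ξ l - -ξ k = ξ k - ξ l := fun k l => by abel
    have htw2 : ∀ k l : Fin N, (-ξ k) ⬝ᵥ Δ *ᵥ (-ξ l) = ξ k ⬝ᵥ Δ *ᵥ ξ l := fun k l => by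
      rw [mulVec_neg, dotProduct_neg, neg_dotProduct, neg_neg]
    simp only [harg, htw2] at h0
    have hTr : (starRingEnd ℂ) (∑ k, ∑ l, c k * g (ξ k - ξ l) *
        Complex.exp (Complex.I / 2 * ((ξ k ⬝ᵥ Δ *ᵥ ξ l : ℝ) : ℂ)) * (starRingEnd ℂ) (c l))
        = ∑ k, ∑ l, c k * g (ξ k - ξ l) *
        Complex.exp (Complex.I / 2 * ((ξ k ⬝ᵥ Δ *ᵥ ξ l : ℝ) : ℂ)) * (starRingEnd ℂ) (c l) := by
      refine Complex.conj_eq_iff_im.mpr ?_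
      have him := (Complex.le_def.mp h0).2
      rw [Complex.zero_im] at him
      exact him.symm
    have hconj : ∑ k, ∑ l, (starRingEnd ℂ) (c k) * ((Matrix.of fun k l : Fin N =>
        g (ξ l - ξ k) * Complex.exp (-(Complex.I / 2) * ((ξ k ⬝ᵥ Δ *ᵥ ξ l : ℝ) : ℂ))) k l) * c l
        = (starRingEnd ℂ) (∑ k, ∑ l, c k * g (ξ k - ξ l) *
          Complex.exp (Complex.I / 2 * ((ξ k ⬝ᵥ Δ *ᵥ ξ l : ℝ) : ℂ)) * (starRingEnd ℂ) (c l)) := by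
      rw [map_sum]
      refine Finset.sum_congr rfl fun k _ => ?_
      rw [map_sum]
      refine Finset.sum_congr rfl fun l _ => ?_
      simp only [Matrix.of_apply, _root_.map_mul, Complex.conj_conj, ← Complex.exp_conj]
      rw [conj_g hΔ hg hg0]
      simp only [map_div₀, map_ofNat, Complex.conj_I, Complex.conj_ofReal]
      ring
    rw [hconj, hTr]
    exact h0

private lemma dot_abs_le {d : ℕ} (x w : Fin d → ℝ) : |x ⬝ᵥ w| ≤ (d : ℝ) * ‖x‖ * ‖w‖ := by
  calc |x ⬝ᵥ w| ≤ ∑ i, |x i * w i| := Finset.abs_sum_le_sum_abs _ _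
    _ ≤ ∑ _i : Fin d, ‖x‖ * ‖w‖ := by
        refine Finset.sum_le_sum fun i _ => ?_
        rw [abs_mul]
        have h1 : |x i| ≤ ‖x‖ := by
          have := norm_le_pi_norm x i; rwa [Real.norm_eq_abs] at this
        have h2 : |w i| ≤ ‖w‖ := by
          have := norm_le_pi_norm w i; rwa [Real.norm_eq_abs] at this
        exact mul_le_mul h1 h2 (abs_nonneg _) (norm_nonneg _)
    _ = (d : ℝ) * ‖x‖ * ‖w‖ := by
        rw [Finset.sum_const, Finset.card_univ, Fintype.card_fin, nsmul_eq_mul, mul_assoc]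

private lemma mulVec_dot {d : ℕ} (A : Matrix (Fin d) (Fin d) ℝ) (x w : Fin d → ℝ) :
    (A *ᵥ x) ⬝ᵥ w = x ⬝ᵥ (Aᵀ *ᵥ w) := by
  rw [dotProduct_mulVec, vecMul_transpose]

private lemma expm_add {d : ℕ} (Z : Matrix (Fin d) (Fin d) ℝ) (u v : ℝ) :
    expm Z (u + v) = expm Z u * expm Z v := by
  unfold expm
  rw [add_smul]
  exact Matrix.exp_add_of_commute _ _ ((Commute.refl Z).smul_left u |>.smul_right v)

private lemma prod_pair {M : Type*} [CommMonoid M] (g : ℕ → M) :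
    ∀ m : ℕ, ∏ i ∈ Finset.range m, (g (2*i) * g (2*i+1)) = ∏ j ∈ Finset.range (2*m), g j := by
  intro m
  induction m with
  | zero => simp
  | succ m ih =>
    rw [Finset.prod_range_succ, ih]
    have h2 : 2*(m+1) = (2*m + 1) + 1 := by ring
    rw [h2, Finset.prod_range_succ, Finset.prod_range_succ, mul_assoc]

private lemma pair_diff {d : ℕ} (Δ Ss Su : Matrix (Fin d) (Fin d) ℝ) (x y : Fin d → ℝ) :
    (Su *ᵥ x) ⬝ᵥ (Δ *ᵥ (Su *ᵥ y)) - ((Ss * Su) *ᵥ x) ⬝ᵥ (Δ *ᵥ ((Ss * Su) *ᵥ y))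
    = (Su *ᵥ x) ⬝ᵥ ((Δ - Ssᵀ * Δ * Ss) *ᵥ (Su *ᵥ y)) := by
  rw [sub_mulVec, dotProduct_sub]
  congr 1
  rw [← mulVec_mulVec y Ss Su, ← mulVec_mulVec x Ss Su, mulVec_dot]
  rw [mulVec_mulVec, mulVec_mulVec, Matrix.mul_assoc]

section norms
attribute [local instance] Matrix.linftyOpNormedAddCommGroup Matrix.linftyOpNormedRing
  Matrix.linftyOpNormedAlgebra

variable {d : ℕ}

private lemma expm_cont (Z : Matrix (Fin d) (Fin d) ℝ) : Continuous (fun u : ℝ => expm Z u) := by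
  refine continuous_iff_continuousAt.mpr fun u => ?_
  exact (hasDerivAt_exp_smul_const (𝕂 := ℝ) Z u).continuousAt

private lemma expm_lip (Z : Matrix (Fin d) (Fin d) ℝ) :
    ∃ L : ℝ, 0 ≤ L ∧ ∀ s : ℝ, 0 ≤ s → s ≤ 1 → ‖expm Z s - 1‖ ≤ L * s := by
  obtain ⟨C, hC⟩ := (isCompact_Icc (a := (0:ℝ)) (b := 1)).exists_bound_of_continuousOn
    (f := fun u => expm Z u * Z) (by exact ((expm_cont Z).mul continuous_const).continuousOn)
  have hC0 : 0 ≤ C := le_trans (norm_nonneg _) (hC 0 (by constructor <;> norm_num))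
  refine ⟨C, hC0, fun s hs0 hs1 => ?_⟩
  have hmv := Convex.norm_image_sub_le_of_norm_hasDerivWithin_le
    (f := fun u : ℝ => expm Z u) (f' := fun u => expm Z u * Z) (s := Set.Icc (0:ℝ) 1)
    (fun x _ => (hasDerivAt_exp_smul_const (𝕂 := ℝ) Z x).hasDerivWithinAt)
    (fun x hx => hC x hx) (convex_Icc _ _) (Set.mem_Icc.mpr ⟨le_refl 0, by norm_num⟩)
    (Set.mem_Icc.mpr ⟨hs0, hs1⟩)
  have h0 : expm Z 0 = 1 := by
    unfold expm; rw [zero_smul]; exact NormedSpace.exp_zero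
  rw [h0] at hmv
  calc ‖expm Z s - 1‖ ≤ C * ‖s - 0‖ := hmv
    _ = C * s := by rw [sub_zero, Real.norm_eq_abs, abs_of_nonneg hs0]

private lemma expm_transpose' (Z : Matrix (Fin d) (Fin d) ℝ) (s : ℝ) :
    (expm Z s)ᵀ = expm Zᵀ s := by
  unfold expm; rw [← Matrix.exp_transpose, transpose_smul]

private lemma expm_bdd (Z : Matrix (Fin d) (Fin d) ℝ) (t : ℝ) :
    ∃ K : ℝ, 0 ≤ K ∧ ∀ u : ℝ, 0 ≤ u → u ≤ t → ‖expm Z u‖ ≤ K := by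
  obtain ⟨C, hC⟩ := (isCompact_Icc (a := (0:ℝ)) (b := t)).exists_bound_of_continuousOn
    (f := fun u => expm Z u) (expm_cont Z).continuousOn
  rcases le_or_gt 0 t with h | h
  · exact ⟨C, le_trans (norm_nonneg _) (hC 0 ⟨le_refl 0, h⟩),
      fun u h1 h2 => hC u ⟨h1, h2⟩⟩
  · exact ⟨0, le_refl 0, fun u h1 h2 => absurd (le_trans h1 h2) (not_le.mpr h)⟩

private lemma sandwich_norm {P S : Matrix (Fin d) (Fin d) ℝ} {e fn : ℝ}
    (he : ‖S - 1‖ ≤ e) (hf : ‖Sᵀ - 1‖ ≤ fn) :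
    ‖P - Sᵀ * P * S‖ ≤ ‖P‖ * e + fn * ‖P‖ + fn * ‖P‖ * e := by
  have hid : P - Sᵀ * P * S
      = -(P * (S - 1) + (Sᵀ - 1) * P + (Sᵀ - 1) * P * (S - 1)) := by
    noncomm_ring
  rw [hid, norm_neg]
  have h1 : ‖P * (S - 1)‖ ≤ ‖P‖ * e :=
    le_trans (norm_mul_le _ _) (mul_le_mul_of_nonneg_left he (norm_nonneg _))
  have h2 : ‖(Sᵀ - 1) * P‖ ≤ fn * ‖P‖ :=
    le_trans (norm_mul_le _ _) (mul_le_mul_of_nonneg_right hf (norm_nonneg _))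
  have h3 : ‖(Sᵀ - 1) * P * (S - 1)‖ ≤ fn * ‖P‖ * e := by
    refine le_trans (norm_mul_le _ _) ?_
    have hf0 : (0:ℝ) ≤ fn := le_trans (norm_nonneg _) hf
    exact mul_le_mul h2 he (norm_nonneg _) (by positivity)
  calc ‖_ + _ + _‖ ≤ _ := le_trans (norm_add_le _ _)
        (add_le_add (norm_add_le _ _) (le_refl _))
    _ ≤ ‖P‖ * e + fn * ‖P‖ + fn * ‖P‖ * e := add_le_add (add_le_add h1 h2) h3

/-- Quantitative bound for the second-difference of the twist along the semigroup. -/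
private lemma pair_twist_bound (Z σ : Matrix (Fin d) (Fin d) ℝ) (t : ℝ) :
    ∃ C : ℝ, 0 ≤ C ∧ ∀ s : ℝ, 0 ≤ s → s ≤ 1 → ∀ u : ℝ, 0 ≤ u → u ≤ t → ∀ x y : Fin d → ℝ,
      |(expm Z u *ᵥ x) ⬝ᵥ (((σ - (expm Z s)ᵀ * σ * expm Z s) -
          (expm Z s)ᵀ * (σ - (expm Z s)ᵀ * σ * expm Z s) * expm Z s) *ᵥ (expm Z u *ᵥ y))|
        ≤ C * s ^ 2 * ‖x‖ * ‖y‖ := by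
  obtain ⟨L, hL0, hL⟩ := expm_lip Z
  obtain ⟨L', hL'0, hL'⟩ := expm_lip Zᵀ
  obtain ⟨K, hK0, hK⟩ := expm_bdd Z t
  refine ⟨(d : ℝ) * K * K * ((‖σ‖ * L + L' * ‖σ‖ + L' * ‖σ‖ * L) * (L + L' + L' * L)),
    by positivity, fun s hs0 hs1 u hu0 hut x y => ?_⟩
  have he : ‖expm Z s - 1‖ ≤ L * s := hL s hs0 hs1
  have hf : ‖(expm Z s)ᵀ - 1‖ ≤ L' * s := by
    rw [expm_transpose']; exact hL' s hs0 hs1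
  have hΔ : ‖σ - (expm Z s)ᵀ * σ * expm Z s‖ ≤ (‖σ‖ * L + L' * ‖σ‖ + L' * ‖σ‖ * L) * s := by
    have hsw := sandwich_norm (P := σ) he hf
    have hs2 : s * s ≤ s := by nlinarith
    have hm : L' * ‖σ‖ * L * (s * s) ≤ L' * ‖σ‖ * L * s :=
      mul_le_mul_of_nonneg_left hs2 (by positivity)
    nlinarith [hm]
  have hD : ‖(σ - (expm Z s)ᵀ * σ * expm Z s) -
      (expm Z s)ᵀ * (σ - (expm Z s)ᵀ * σ * expm Z s) * expm Z s‖
      ≤ ((‖σ‖ * L + L' * ‖σ‖ + L' * ‖σ‖ * L) * (L + L' + L' * L)) * s ^ 2 := by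
    have hsw := sandwich_norm (P := σ - (expm Z s)ᵀ * σ * expm Z s) he hf
    have hΔ0 : (0:ℝ) ≤ ‖σ - (expm Z s)ᵀ * σ * expm Z s‖ := norm_nonneg _
    have e1 : ‖σ - (expm Z s)ᵀ * σ * expm Z s‖ * (L * s)
        ≤ (‖σ‖ * L + L' * ‖σ‖ + L' * ‖σ‖ * L) * s * (L * s) :=
      mul_le_mul_of_nonneg_right hΔ (by positivity)
    have e2 : L' * s * ‖σ - (expm Z s)ᵀ * σ * expm Z s‖
        ≤ L' * s * ((‖σ‖ * L + L' * ‖σ‖ + L' * ‖σ‖ * L) * s) :=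
      mul_le_mul_of_nonneg_left hΔ (by positivity)
    have e3 : L' * s * ‖σ - (expm Z s)ᵀ * σ * expm Z s‖ * (L * s)
        ≤ L' * s * ((‖σ‖ * L + L' * ‖σ‖ + L' * ‖σ‖ * L) * s) * (L * s) :=
      mul_le_mul_of_nonneg_right e2 (by positivity)
    have hs3 : L' * ((‖σ‖ * L + L' * ‖σ‖ + L' * ‖σ‖ * L)) * L * (s * s * s)
        ≤ L' * ((‖σ‖ * L + L' * ‖σ‖ + L' * ‖σ‖ * L)) * L * (s * s) := by
      have h4 : s * s * s ≤ s * s := by nlinarith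
      exact mul_le_mul_of_nonneg_left h4 (by positivity)
    nlinarith [e1, e2, e3, hs3]
  have hx : ‖expm Z u *ᵥ x‖ ≤ K * ‖x‖ :=
    le_trans (Matrix.linfty_opNorm_mulVec _ _)
      (mul_le_mul_of_nonneg_right (hK u hu0 hut) (norm_nonneg _))
  have hy : ‖expm Z u *ᵥ y‖ ≤ K * ‖y‖ :=
    le_trans (Matrix.linfty_opNorm_mulVec _ _)
      (mul_le_mul_of_nonneg_right (hK u hu0 hut) (norm_nonneg _))
  have hDy : ‖(((σ - (expm Z s)ᵀ * σ * expm Z s) -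
      (expm Z s)ᵀ * (σ - (expm Z s)ᵀ * σ * expm Z s) * expm Z s)) *ᵥ (expm Z u *ᵥ y)‖
      ≤ (((‖σ‖ * L + L' * ‖σ‖ + L' * ‖σ‖ * L) * (L + L' + L' * L)) * s ^ 2) * (K * ‖y‖) := by
    refine le_trans (Matrix.linfty_opNorm_mulVec _ _) ?_
    exact mul_le_mul hD hy (norm_nonneg _) (by positivity)
  refine le_trans (dot_abs_le _ _) ?_
  have hdd : (0:ℝ) ≤ (d:ℝ) := by positivity
  calc (d:ℝ) * ‖expm Z u *ᵥ x‖ * ‖_ *ᵥ (expm Z u *ᵥ y)‖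
      ≤ (d:ℝ) * (K * ‖x‖) * ((((‖σ‖ * L + L' * ‖σ‖ + L' * ‖σ‖ * L) * (L + L' + L' * L)) * s ^ 2)
          * (K * ‖y‖)) := by
        refine mul_le_mul (mul_le_mul_of_nonneg_left hx hdd) hDy (norm_nonneg _) (by positivity)
    _ = (d : ℝ) * K * K * ((‖σ‖ * L + L' * ‖σ‖ + L' * ‖σ‖ * L) * (L + L' + L' * L)) * s ^ 2
          * ‖x‖ * ‖y‖ := by ring

end norms


private lemma entry_merge (F1 F2 : ℂ) (a b : ℝ) :
    (F1 * Complex.exp (Complex.I / 2 * (a : ℂ))) * (F2 * Complex.exp (-(Complex.I / 2) * (b : ℂ)))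
    = (F1 * F2) * Complex.exp (Complex.I / 2 * (((a - b : ℝ)) : ℂ)) := by
  rw [show Complex.I / 2 * (((a - b : ℝ)) : ℂ)
      = Complex.I / 2 * (a : ℂ) + -(Complex.I / 2) * (b : ℂ) by push_cast; ring,
    Complex.exp_add]
  ring

private lemma base_pos {N : ℕ} (c : Fin N → ℂ) :
    0 ≤ ∑ k, ∑ l, (starRingEnd ℂ) (c k) * (1 : ℂ) * c l := by
  have h : ∑ k, ∑ l, (starRingEnd ℂ) (c k) * (1 : ℂ) * c l
      = (starRingEnd ℂ) (∑ k, c k) * (∑ l, c l) := by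
    rw [map_sum, Finset.sum_mul]
    refine Finset.sum_congr rfl fun k _ => ?_
    rw [Finset.mul_sum]
    exact Finset.sum_congr rfl fun l _ => by ring
  rw [h, Complex.conj_mul']
  positivity

/-- Positivity of the quadratic form of an entrywise (Schur) product of a family of
positive semidefinite matrices, paired two at a time. -/
private lemma core_pos {N : ℕ} {P G : ℕ → Matrix (Fin N) (Fin N) ℂ}
    (hP : ∀ i, (P i).PosSemidef) (hG : ∀ i, (G i).PosSemidef) :
    ∀ (m : ℕ) (c : Fin N → ℂ),
      0 ≤ ∑ k, ∑ l, (starRingEnd ℂ) (c k) *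
        (∏ i ∈ Finset.range m, (P i k l * G i k l)) * c l := by
  intro m
  induction m with
  | zero => intro c; simpa using base_pos c
  | succ m ih =>
    intro c
    have hstep := schur_step (P m)
      (fun k l => G m k l * ∏ i ∈ Finset.range m, (P i k l * G i k l)) (hP m)
      (schur_step (G m) (fun k l => ∏ i ∈ Finset.range m, (P i k l * G i k l)) (hG m) ih)
    refine le_trans (hstep c) (le_of_eq ?_)
    refine Finset.sum_congr rfl fun k _ => Finset.sum_congr rfl fun l _ => ?_
    rw [Finset.prod_range_succ]
    ring

end Stmt3Aux

/-- if every `f_t` is twisted positive definite with respect to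
`σ - S_tᵀ σ S_t`, then every `f_t` is positive definite. -/
theorem stmt3 (d : ℕ) (hd : 0 < d) (Z σ : Matrix (Fin d) (Fin d) ℝ) (hσ : σᵀ = -σ)
    (f : ℝ → (Fin d → ℝ) → ℂ)
    (hfcont : ContinuousOn (fun p : ℝ × (Fin d → ℝ) => f p.1 p.2) {p | 0 ≤ p.1})
    (hfinit : ∀ ξ : Fin d → ℝ, f 0 ξ = 1)
    (hfnorm : ∀ t : ℝ, 0 ≤ t → f t 0 = 1)
    (hprod : ∀ s t : ℝ, 0 ≤ s → 0 ≤ t → ∀ ξ : Fin d → ℝ,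
      f (t + s) ξ = f s ((expm Z t).mulVec ξ) * f t ξ)
    (htw : ∀ t : ℝ, 0 ≤ t →
      TwistedPosDef (σ - (expm Z t)ᵀ * σ * expm Z t) (f t)) :
    ∀ t : ℝ, 0 ≤ t → ∀ (N : ℕ) (ξ : Fin N → (Fin d → ℝ)) (c : Fin N → ℂ),
      0 ≤ ∑ k : Fin N, ∑ l : Fin N, (starRingEnd ℂ) (c k) * f t (ξ l - ξ k) * c l := by
  intro t ht N χ c
  -- skew-symmetry of all the twists
  have hskew : ∀ s : ℝ, (σ - (expm Z s)ᵀ * σ * expm Z s)ᵀ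
      = -(σ - (expm Z s)ᵀ * σ * expm Z s) := by
    intro s
    rw [transpose_sub, transpose_mul, transpose_mul, transpose_transpose, hσ]
    noncomm_ring
  -- iterated product formula along the flow
  have hmulti : ∀ s : ℝ, 0 ≤ s → ∀ n : ℕ, ∀ ζ : Fin d → ℝ,
      f ((n : ℝ) * s) ζ = ∏ j ∈ Finset.range n, f s (expm Z ((j : ℝ) * s) *ᵥ ζ) := by
    intro s hs n
    induction n with
    | zero => intro ζ; simpa using hfinit ζ
    | succ n ih =>
      intro ζ
      have hc : ((n + 1 : ℕ) : ℝ) * s = (n : ℝ) * s + s := by push_cast; ring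
      rw [hc, hprod s ((n : ℝ) * s) hs (by positivity), Finset.prod_range_succ, ih ζ]
      ring
  -- the accumulated phases
  set phs : ℕ → Fin N → Fin N → ℝ := fun m k l => ∑ i ∈ Finset.range m,
      ((expm Z (((2*i : ℕ) : ℝ) * (t / (2*m))) *ᵥ χ k) ⬝ᵥ
        ((σ - (expm Z (t / (2*m)))ᵀ * σ * expm Z (t / (2*m))) *ᵥ
          (expm Z (((2*i : ℕ) : ℝ) * (t / (2*m))) *ᵥ χ l))
      - (expm Z (((2*i+1 : ℕ) : ℝ) * (t / (2*m))) *ᵥ χ k) ⬝ᵥ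
        ((σ - (expm Z (t / (2*m)))ᵀ * σ * expm Z (t / (2*m))) *ᵥ
          (expm Z (((2*i+1 : ℕ) : ℝ) * (t / (2*m))) *ᵥ χ l))) with hphs
  -- positivity of the approximations
  have key : ∀ m : ℕ, 1 ≤ m →
      0 ≤ ∑ k, ∑ l, (starRingEnd ℂ) (c k) * (f t (χ l - χ k) *
        Complex.exp (Complex.I / 2 * ((phs m k l : ℝ) : ℂ))) * c l := by
    intro m hm
    have hm0 : (0:ℝ) < 2 * m := by positivity
    have hs0 : 0 ≤ t / (2*m) := div_nonneg ht (by positivity)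
    have hpos := core_pos
      (P := fun i => Matrix.of fun k l : Fin N =>
        f (t / (2*m)) (expm Z (((2*i : ℕ) : ℝ) * (t / (2*m))) *ᵥ χ l
            - expm Z (((2*i : ℕ) : ℝ) * (t / (2*m))) *ᵥ χ k) *
        Complex.exp (Complex.I / 2 * (((expm Z (((2*i : ℕ) : ℝ) * (t / (2*m))) *ᵥ χ k) ⬝ᵥ
          ((σ - (expm Z (t / (2*m)))ᵀ * σ * expm Z (t / (2*m))) *ᵥ
            (expm Z (((2*i : ℕ) : ℝ) * (t / (2*m))) *ᵥ χ l)) : ℝ) : ℂ)))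
      (G := fun i => Matrix.of fun k l : Fin N =>
        f (t / (2*m)) (expm Z (((2*i+1 : ℕ) : ℝ) * (t / (2*m))) *ᵥ χ l
            - expm Z (((2*i+1 : ℕ) : ℝ) * (t / (2*m))) *ᵥ χ k) *
        Complex.exp (-(Complex.I / 2) * (((expm Z (((2*i+1 : ℕ) : ℝ) * (t / (2*m))) *ᵥ χ k) ⬝ᵥ
          ((σ - (expm Z (t / (2*m)))ᵀ * σ * expm Z (t / (2*m))) *ᵥ
            (expm Z (((2*i+1 : ℕ) : ℝ) * (t / (2*m))) *ᵥ χ l)) : ℝ) : ℂ)))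
      (fun i => twisted_psd_plus (hskew (t / (2*m))) (htw (t / (2*m)) hs0)
        (hfnorm (t / (2*m)) hs0) _)
      (fun i => twisted_psd_minus (hskew (t / (2*m))) (htw (t / (2*m)) hs0)
        (hfnorm (t / (2*m)) hs0) _)
      m c
    refine le_trans hpos (le_of_eq ?_)
    refine Finset.sum_congr rfl fun k _ => Finset.sum_congr rfl fun l _ => ?_
    congr 2
    -- the entrywise product identity
    have e1 : ∀ i : ℕ,
        (Matrix.of fun k l : Fin N =>
          f (t / (2*m)) (expm Z (((2*i : ℕ) : ℝ) * (t / (2*m))) *ᵥ χ l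
              - expm Z (((2*i : ℕ) : ℝ) * (t / (2*m))) *ᵥ χ k) *
          Complex.exp (Complex.I / 2 * (((expm Z (((2*i : ℕ) : ℝ) * (t / (2*m))) *ᵥ χ k) ⬝ᵥ
            ((σ - (expm Z (t / (2*m)))ᵀ * σ * expm Z (t / (2*m))) *ᵥ
              (expm Z (((2*i : ℕ) : ℝ) * (t / (2*m))) *ᵥ χ l)) : ℝ) : ℂ))) k l *
        (Matrix.of fun k l : Fin N =>
          f (t / (2*m)) (expm Z (((2*i+1 : ℕ) : ℝ) * (t / (2*m))) *ᵥ χ l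
              - expm Z (((2*i+1 : ℕ) : ℝ) * (t / (2*m))) *ᵥ χ k) *
          Complex.exp (-(Complex.I / 2) * (((expm Z (((2*i+1 : ℕ) : ℝ) * (t / (2*m))) *ᵥ χ k) ⬝ᵥ
            ((σ - (expm Z (t / (2*m)))ᵀ * σ * expm Z (t / (2*m))) *ᵥ
              (expm Z (((2*i+1 : ℕ) : ℝ) * (t / (2*m))) *ᵥ χ l)) : ℝ) : ℂ))) k l
        = (f (t / (2*m)) (expm Z (((2*i : ℕ) : ℝ) * (t / (2*m))) *ᵥ (χ l - χ k)) *
           f (t / (2*m)) (expm Z (((2*i+1 : ℕ) : ℝ) * (t / (2*m))) *ᵥ (χ l - χ k))) *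
          Complex.exp (Complex.I / 2 * ((((expm Z (((2*i : ℕ) : ℝ) * (t / (2*m))) *ᵥ χ k) ⬝ᵥ
            ((σ - (expm Z (t / (2*m)))ᵀ * σ * expm Z (t / (2*m))) *ᵥ
              (expm Z (((2*i : ℕ) : ℝ) * (t / (2*m))) *ᵥ χ l))
          - (expm Z (((2*i+1 : ℕ) : ℝ) * (t / (2*m))) *ᵥ χ k) ⬝ᵥ
            ((σ - (expm Z (t / (2*m)))ᵀ * σ * expm Z (t / (2*m))) *ᵥ
              (expm Z (((2*i+1 : ℕ) : ℝ) * (t / (2*m))) *ᵥ χ l)) : ℝ)) : ℂ)) := by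
      intro i
      simp only [Matrix.of_apply, mulVec_sub]
      exact entry_merge _ _ _ _
    rw [Finset.prod_congr rfl fun i _ => e1 i, Finset.prod_mul_distrib]
    have e2 : ∏ i ∈ Finset.range m,
        (f (t / (2*m)) (expm Z (((2*i : ℕ) : ℝ) * (t / (2*m))) *ᵥ (χ l - χ k)) *
         f (t / (2*m)) (expm Z (((2*i+1 : ℕ) : ℝ) * (t / (2*m))) *ᵥ (χ l - χ k)))
        = f t (χ l - χ k) := by
      rw [prod_pair (fun j : ℕ => f (t / (2*m)) (expm Z ((j : ℝ) * (t / (2*m))) *ᵥ (χ l - χ k))) m]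
      rw [← hmulti (t / (2*m)) hs0 (2*m) (χ l - χ k)]
      congr 1
      push_cast
      field_simp
    have e3 : ∏ i ∈ Finset.range m,
        Complex.exp (Complex.I / 2 * ((((expm Z (((2*i : ℕ) : ℝ) * (t / (2*m))) *ᵥ χ k) ⬝ᵥ
          ((σ - (expm Z (t / (2*m)))ᵀ * σ * expm Z (t / (2*m))) *ᵥ
            (expm Z (((2*i : ℕ) : ℝ) * (t / (2*m))) *ᵥ χ l))
        - (expm Z (((2*i+1 : ℕ) : ℝ) * (t / (2*m))) *ᵥ χ k) ⬝ᵥ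
          ((σ - (expm Z (t / (2*m)))ᵀ * σ * expm Z (t / (2*m))) *ᵥ
            (expm Z (((2*i+1 : ℕ) : ℝ) * (t / (2*m))) *ᵥ χ l)) : ℝ)) : ℂ))
        = Complex.exp (Complex.I / 2 * ((phs m k l : ℝ) : ℂ)) := by
      rw [← Complex.exp_sum]
      congr 1
      rw [hphs]
      push_cast
      rw [Finset.mul_sum]
    rw [e2, e3]
  -- quantitative bound on the phases
  obtain ⟨C, hC0, hC⟩ := pair_twist_bound Z σ t
  have hbnd : ∀ m : ℕ, 1 ≤ m → t ≤ 2 * (m : ℝ) → ∀ k l : Fin N,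
      |phs m k l| ≤ C * t ^ 2 * ‖χ k‖ * ‖χ l‖ / 4 * (1 / m) := by
    intro m hm hmt k l
    have hmpos : (0:ℝ) < (m:ℝ) := by exact_mod_cast hm
    have hs0 : 0 ≤ t / (2*m) := div_nonneg ht (by positivity)
    have hs1 : t / (2*m) ≤ 1 := by
      rw [div_le_one (by positivity)]; linarith
    rw [hphs]
    refine le_trans (Finset.abs_sum_le_sum_abs _ _) (le_trans (Finset.sum_le_sum
      (g := fun _ : ℕ => C * (t/(2*m))^2 * ‖χ k‖ * ‖χ l‖) (fun i hi => ?_)) ?_)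
    · have harg : ((2*i+1 : ℕ) : ℝ) * (t/(2*m)) = (t/(2*m)) + ((2*i : ℕ) : ℝ) * (t/(2*m)) := by
        push_cast; ring
      rw [harg, expm_add, pair_diff]
      have hu0 : 0 ≤ ((2*i : ℕ) : ℝ) * (t/(2*m)) := mul_nonneg (by positivity) hs0
      have hut : ((2*i : ℕ) : ℝ) * (t/(2*m)) ≤ t := by
        have hi2 : ((2*i : ℕ) : ℝ) ≤ 2*(m:ℝ) := by
          have h3 : (2*i : ℕ) ≤ 2*m := by
            have := Finset.mem_range.mp hi; omega
          exact_mod_cast h3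
        calc ((2*i : ℕ) : ℝ) * (t/(2*m)) ≤ 2*(m:ℝ) * (t/(2*m)) :=
              mul_le_mul_of_nonneg_right hi2 hs0
          _ = t := by field_simp
      exact hC (t/(2*m)) hs0 hs1 (((2*i : ℕ) : ℝ) * (t/(2*m))) hu0 hut (χ k) (χ l)
    · rw [Finset.sum_const, Finset.card_range, nsmul_eq_mul]
      refine le_of_eq ?_
      field_simp
      ring
  -- passage to the limit
  have hAtend : Tendsto (fun m : ℕ => ∑ k, ∑ l, (starRingEnd ℂ) (c k) * (f t (χ l - χ k) *
      Complex.exp (Complex.I / 2 * ((phs m k l : ℝ) : ℂ))) * c l) atTop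
      (𝓝 (∑ k, ∑ l, (starRingEnd ℂ) (c k) * f t (χ l - χ k) * c l)) := by
    refine tendsto_finset_sum _ fun k _ => tendsto_finset_sum _ fun l _ => ?_
    have hphs0 : Tendsto (fun m : ℕ => phs m k l) atTop (𝓝 0) := by
      refine squeeze_zero_norm' (a := fun m : ℕ => C * t ^ 2 * ‖χ k‖ * ‖χ l‖ / 4 * (1 / (m:ℝ))) ?_ ?_
      · filter_upwards [Filter.eventually_ge_atTop (max 1 (Nat.ceil t))] with m hm
        have hm1 : 1 ≤ m := le_trans (le_max_left _ _) hm
        have hm2 : t ≤ 2 * (m:ℝ) := by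
          have h1 : (Nat.ceil t : ℝ) ≤ (m:ℝ) := by
            exact_mod_cast le_trans (le_max_right _ _) hm
          have h2 : t ≤ (Nat.ceil t : ℝ) := Nat.le_ceil t
          have h3 : (0:ℝ) ≤ (m:ℝ) := Nat.cast_nonneg m
          linarith
        rw [Real.norm_eq_abs]
        exact hbnd m hm1 hm2 k l
      · have h4 := tendsto_const_div_atTop_nhds_zero_nat (C * t ^ 2 * ‖χ k‖ * ‖χ l‖ / 4)
        refine h4.congr fun m => ?_
        rw [div_eq_mul_inv, one_div]
    have hexp : Tendsto (fun m : ℕ => Complex.exp (Complex.I / 2 * ((phs m k l : ℝ) : ℂ)))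
        atTop (𝓝 1) := by
      have hcont : Continuous fun r : ℝ => Complex.exp (Complex.I / 2 * (r : ℂ)) :=
        Complex.continuous_exp.comp (continuous_const.mul Complex.continuous_ofReal)
      have h5 := (hcont.tendsto 0).comp hphs0
      simpa [Function.comp_def] using h5
    have h6 := (tendsto_const_nhds (x := (starRingEnd ℂ) (c k)) (f := atTop (α := ℕ))).mul
      (((tendsto_const_nhds (x := f t (χ l - χ k)) (f := atTop (α := ℕ))).mul hexp).mul
      (tendsto_const_nhds (x := c l) (f := atTop (α := ℕ))))
    simp only [mul_one] at h6
    rw [mul_assoc]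
    exact h6.congr fun m => by ring
  -- conclude
  have hev2 : ∀ᶠ m : ℕ in atTop, ((∑ k, ∑ l, (starRingEnd ℂ) (c k) * (f t (χ l - χ k) *
      Complex.exp (Complex.I / 2 * ((phs m k l : ℝ) : ℂ))) * c l).im = 0 ∧
      0 ≤ (∑ k, ∑ l, (starRingEnd ℂ) (c k) * (f t (χ l - χ k) *
      Complex.exp (Complex.I / 2 * ((phs m k l : ℝ) : ℂ))) * c l).re) := by
    filter_upwards [Filter.eventually_ge_atTop 1] with m hm
    have h7 := Complex.le_def.mp (key m hm)
    refine ⟨?_, ?_⟩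
    · rw [← h7.2, Complex.zero_im]
    · have := h7.1
      rwa [Complex.zero_re] at this
  rw [Complex.le_def]
  constructor
  · rw [Complex.zero_re]
    refine ge_of_tendsto ((Complex.continuous_re.tendsto _).comp hAtend) ?_
    filter_upwards [hev2] with m hm
    exact hm.2
  · rw [Complex.zero_im]
    refine tendsto_nhds_unique ?_ ((Complex.continuous_im.tendsto _).comp hAtend)
    refine Filter.Tendsto.congr' ?_ (tendsto_const_nhds (x := (0:ℝ)))
    filter_upwards [hev2] with m hm
    exact hm.1.symm
end

section
/- Let Z be a real d×d matrix, set S_t := exp(tZ), and let f : [0,∞) × ℝ^d → ℂ be jointly continuous with f_0(ξ) = 1 and f_t(0) = 1 for all t ≥ 0, ξ ∈ ℝ^d, satisfying the product formula f_{t+s}(ξ) = f_s(S_t ξ) · f_t(ξ); assume further that for all t, s ≥ 0 the function ξ ↦ f_t(S_s ξ) is the characteristic function of some probability measure on ℝ^d. Then f_t(ξ) ≠ 0 for all t ≥ 0 and ξ ∈ ℝ^d, and there is a unique jointly continuous function Ψ : [0,∞) × ℝ^d → ℂ such that exp(Ψ_t(ξ)) = f_t(ξ) for all t, ξ and Ψ_0(0)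 = 0; moreover this Ψ satisfies Ψ_0(ξ) = 0 for all ξ and Ψ_t(0) = 0 for all t. -/
open MeasureTheory Matrix Filter ComplexOrder

section Aux

open Complex Metric

/-- Uniqueness of continuous logarithms on preconnected sets. -/
private lemma aux_eqOn_exp {X : Type*} [TopologicalSpace X] {S : Set X} (hS : IsPreconnected S)
    {g h : X → ℂ} (hg : ContinuousOn g S) (hh : ContinuousOn h S)
    (hgh : ∀ x ∈ S, Complex.exp (g x) = Complex.exp (h x))
    {x₀ : X} (hx₀ : x₀ ∈ S) (h0 : g x₀ = h x₀) : ∀ x ∈ S, g x = h x := by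
  have key : ∀ x ∈ S, ∃ n : ℤ, g x - h x = n * (2 * Real.pi * Complex.I) := by
    intro x hx
    rw [← Complex.exp_eq_one_iff, Complex.exp_sub, hgh x hx,
      div_self (Complex.exp_ne_zero _)]
  set ψ : X → ℝ := fun x => (g x - h x).im with hψdef
  have hψc : ContinuousOn ψ S := Complex.continuous_im.comp_continuousOn (hg.sub hh)
  have himg : IsPreconnected (ψ '' S) := hS.image ψ hψc
  have hT : ∀ x ∈ S, ∃ n : ℤ, ψ x = n * (2 * Real.pi) := by
    intro x hx; obtain ⟨n, hn⟩ := key x hx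
    refine ⟨n, ?_⟩
    have : ψ x = (g x - h x).im := rfl
    rw [this, hn]
    simp [Complex.mul_im]
  have hint : ∀ y ∈ ψ '' S, ∃ n : ℤ, y = n * (2 * Real.pi) := by
    rintro y ⟨x, hx, rfl⟩; exact hT x hx
  have hx₀0 : ψ x₀ = 0 := by simp [hψdef, h0]
  have hpi := Real.pi_pos
  have hzero : ∀ x ∈ S, ψ x = 0 := by
    intro x hx
    by_contra hne
    have hOC : (ψ '' S).OrdConnected := himg.ordConnected
    obtain ⟨n, hn⟩ := hT x hx
    have hmem0 : (0 : ℝ) ∈ ψ '' S := hx₀0 ▸ Set.mem_image_of_mem ψ hx₀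
    have hmemx : ψ x ∈ ψ '' S := Set.mem_image_of_mem ψ hx
    rcases lt_or_gt_of_ne hne with hlt | hgt
    · -- ψ x < 0, so n ≤ -1 and -π ∈ [ψ x, 0]
      have hn1 : (n : ℝ) ≤ -1 := by
        have h1 : (n : ℝ) < 0 := by nlinarith
        have h2 : n < 0 := by exact_mod_cast h1
        have h3 : n ≤ -1 := by omega
        exact_mod_cast h3
      have hmempi : -Real.pi ∈ ψ '' S := by
        apply hOC.out hmemx hmem0
        constructor
        · rw [hn]; nlinarith
        · linarith
      obtain ⟨m, hm⟩ := hint _ hmempi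
      have h4 : Real.pi * ((-1 : ℝ) - m * 2) = 0 := by linear_combination hm
      have h5 : (-1 : ℝ) - (m : ℝ) * 2 = 0 := by
        rcases mul_eq_zero.mp h4 with h | h
        · exact absurd h (ne_of_gt hpi)
        · exact h
      have h6 : (-1 : ℝ) = (m : ℝ) * 2 := by linarith
      have : (-1 : ℤ) = m * 2 := by exact_mod_cast h6
      omega
    · -- ψ x > 0, so n ≥ 1 and π ∈ [0, ψ x]
      have hn1 : (1 : ℝ) ≤ (n : ℝ) := by
        have h1 : (0 : ℝ) < n := by nlinarith
        have h2 : 0 < n := by exact_mod_cast h1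
        have h3 : 1 ≤ n := by omega
        exact_mod_cast h3
      have hmempi : Real.pi ∈ ψ '' S := by
        apply hOC.out hmem0 hmemx
        constructor
        · linarith
        · rw [hn]; nlinarith
      obtain ⟨m, hm⟩ := hint _ hmempi
      have h4 : Real.pi * ((1 : ℝ) - m * 2) = 0 := by linear_combination hm
      have h5 : (1 : ℝ) - (m : ℝ) * 2 = 0 := by
        rcases mul_eq_zero.mp h4 with h | h
        · exact absurd h (ne_of_gt hpi)
        · exact h
      have h6 : (1 : ℝ) = (m : ℝ) * 2 := by linarith
      have : (1 : ℤ) = m * 2 := by exact_mod_cast h6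
      omega
  intro x hx
  obtain ⟨n, hn⟩ := key x hx
  have him : ψ x = n * (2 * Real.pi) := by
    have : ψ x = (g x - h x).im := rfl
    rw [this, hn]; simp [Complex.mul_im]
  have hn0 : (n : ℝ) = 0 := by
    have := hzero x hx
    rw [this] at him
    nlinarith
  have : (n : ℤ) = 0 := by exact_mod_cast hn0
  rw [this] at hn
  simp at hn
  exact sub_eq_zero.mp hn

/-- Existence of a continuous logarithm on a closed ball. -/
private lemma aux_log_ball {E : Type*} [NormedAddCommGroup E] [NormedSpace ℝ E] [ProperSpace E]
    {F : E → ℂ} (hF : Continuous F) (hFne : ∀ x, F x ≠ 0) (hF0 : F 0 = 1)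
    {R : ℝ} (hR : 0 ≤ R) :
    ∃ g : E → ℂ, ContinuousOn g (Metric.closedBall 0 R) ∧
      (∀ x, Complex.exp (g x) = F x) ∧ g 0 = 0 := by
  set K := Metric.closedBall (0 : E) R with hKdef
  have hKc : IsCompact K := isCompact_closedBall 0 R
  have h0K : (0 : E) ∈ K := Metric.mem_closedBall_self hR
  -- positive lower bound for ‖F‖ on K
  obtain ⟨z, hzK, hz⟩ := hKc.exists_isMinOn ⟨0, h0K⟩ (continuous_norm.comp hF).continuousOn
  set c : ℝ := ‖F z‖ with hcdef
  have hc : 0 < c := norm_pos_iff.mpr (hFne z)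
  have hcle : ∀ y ∈ K, c ≤ ‖F y‖ := fun y hy => hz hy
  -- uniform continuity of (t, x) ↦ F (t • x) on [0,1] × K
  have hΦ : Continuous fun p : ℝ × E => F (p.1 • p.2) :=
    hF.comp (continuous_fst.smul continuous_snd)
  have hcomp : IsCompact ((Set.Icc (0:ℝ) 1) ×ˢ K) := isCompact_Icc.prod hKc
  have hucont := hcomp.uniformContinuousOn_of_continuous hΦ.continuousOn
  rw [Metric.uniformContinuousOn_iff] at hucont
  obtain ⟨δ, hδ, hδ'⟩ := hucont c hc
  obtain ⟨n, hn⟩ := exists_nat_one_div_lt hδ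
  set N : ℕ := n + 1 with hNdef
  have hNpos : (0 : ℝ) < N := by positivity
  have hNne : (N : ℝ) ≠ 0 := ne_of_gt hNpos
  set u : ℕ → E → ℂ := fun k x => F (((k : ℝ) / N) • x) with hudef
  have hune : ∀ k x, u k x ≠ 0 := fun k x => hFne _
  -- scaled points stay in K
  have hscale : ∀ k : ℕ, k ≤ N → ∀ x ∈ K, ((k : ℝ) / N) • x ∈ K := by
    intro k hk x hx
    rw [hKdef, Metric.mem_closedBall, dist_zero_right] at hx ⊢
    rw [norm_smul]
    have h1 : ‖((k:ℝ)/N)‖ ≤ 1 := by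
      rw [Real.norm_eq_abs, abs_div, _root_.abs_of_nonneg (by positivity : (0:ℝ) ≤ (k:ℝ)),
        _root_.abs_of_nonneg hNpos.le, div_le_one hNpos]
      exact_mod_cast hk
    calc ‖((k:ℝ)/N)‖ * ‖x‖ ≤ 1 * ‖x‖ := by
          apply mul_le_mul_of_nonneg_right h1 (norm_nonneg _)
      _ = ‖x‖ := one_mul _
      _ ≤ R := hx
  -- the key estimate on ratios
  have hkey : ∀ x ∈ K, ∀ k : ℕ, k < N → ‖u (k+1) x / u k x - 1‖ < 1 := by
    intro x hx k hk
    have hb : u k x ≠ 0 := hune k x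
    have hmem1 : (((k:ℝ)+1)/N, x) ∈ (Set.Icc (0:ℝ) 1) ×ˢ K := by
      constructor
      · constructor
        · positivity
        · rw [div_le_one hNpos]
          have : (k:ℝ) + 1 ≤ N := by exact_mod_cast hk
          exact this
      · exact hx
    have hmem2 : ((k:ℝ)/N, x) ∈ (Set.Icc (0:ℝ) 1) ×ˢ K := by
      constructor
      · constructor
        · positivity
        · rw [div_le_one hNpos]
          have : (k:ℝ) ≤ N := by exact_mod_cast hk.le
          exact this
      · exact hx
    have hdist : dist ((((k:ℝ)+1)/N, x) : ℝ × E) (((k:ℝ)/N, x)) < δ := by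
      rw [Prod.dist_eq]
      simp only [dist_self]
      rw [max_eq_left dist_nonneg, Real.dist_eq]
      have : ((k:ℝ)+1)/N - (k:ℝ)/N = 1/N := by field_simp; ring
      rw [this, _root_.abs_of_nonneg (by positivity)]
      have : (1:ℝ)/N = 1/(n+1) := by norm_num [hNdef]
      rw [this]; exact hn
    have hFd := hδ' _ hmem1 _ hmem2 hdist
    rw [dist_eq_norm] at hFd
    have hab : ‖F ((((k:ℝ)+1)/N) • x) - F (((k:ℝ)/N) • x)‖ < ‖u k x‖ := by
      apply lt_of_lt_of_le hFd
      exact hcle _ (hscale k hk.le x hx)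
    have hsub : u (k+1) x / u k x - 1 = (u (k+1) x - u k x) / u k x := by
      field_simp
    rw [hsub, norm_div, div_lt_one (norm_pos_iff.mpr hb)]
    have hcast : ((k+1 : ℕ) : ℝ) = (k:ℝ) + 1 := by push_cast; ring
    have hcongr : u (k+1) x = F ((((k:ℝ)+1)/N) • x) := by
      rw [hudef]; push_cast; ring_nf
    rw [hcongr]
    exact hab
  -- definition of the logarithm
  refine ⟨fun x => ∑ k ∈ Finset.range N, Complex.log (u (k+1) x / u k x), ?_, ?_, ?_⟩
  · -- continuity on K
    apply continuousOn_finset_sum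
    intro k hk
    rw [Finset.mem_range] at hk
    have hr : Continuous fun x => u (k+1) x / u k x := by
      apply Continuous.div
      · exact hF.comp (continuous_const_smul _)
      · exact hF.comp (continuous_const_smul _)
      · exact fun x => hune k x
    intro x hx
    have h1 : ‖(u (k+1) x / u k x - 1)‖ < 1 := hkey x hx k hk
    have hslit : (u (k+1) x / u k x) ∈ Complex.slitPlane := by
      have := Complex.mem_slitPlane_of_norm_lt_one h1
      simpa using this
    exact ContinuousWithinAt.clog hr.continuousWithinAt hslit
  · -- exponential property (holds globally)
    intro x
    rw [Complex.exp_sum]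
    have hprodlog : ∀ k ∈ Finset.range N,
        Complex.exp (Complex.log (u (k+1) x / u k x)) = u (k+1) x / u k x := by
      intro k _
      exact Complex.exp_log (div_ne_zero (hune _ x) (hune k x))
    rw [Finset.prod_congr rfl hprodlog]
    have htel : ∀ m : ℕ, ∏ k ∈ Finset.range m, (u (k+1) x / u k x) = u m x / u 0 x := by
      intro m
      induction m with
      | zero => simp [div_self (hune 0 x)]
      | succ m ih =>
        rw [Finset.prod_range_succ, ih]
        have h1 := hune m x
        have h2 := hune 0 x
        field_simp
    rw [htel N]
    have hN1 : u N x = F x := by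
      rw [hudef]
      simp only []
      rw [div_self hNne, one_smul]
    have hN0 : u 0 x = 1 := by
      rw [hudef]
      simp only [Nat.cast_zero, zero_div, zero_smul]
      exact hF0
    rw [hN1, hN0, div_one]
  · -- value at 0
    apply Finset.sum_eq_zero
    intro k _
    rw [hudef]
    simp only [smul_zero]
    rw [div_self (hFne 0), Complex.log_one]

/-- Existence of a global continuous logarithm on a finite-dimensional space. -/
private lemma aux_global_log {E : Type*} [NormedAddCommGroup E] [NormedSpace ℝ E]
    [ProperSpace E] {F : E → ℂ} (hF : Continuous F) (hFne : ∀ x, F x ≠ 0) (hF0 : F 0 = 1) :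
    ∃ G : E → ℂ, Continuous G ∧ (∀ x, Complex.exp (G x) = F x) ∧ G 0 = 0 := by
  have hex : ∀ m : ℕ, ∃ g : E → ℂ, ContinuousOn g (Metric.closedBall 0 (m+1)) ∧
      (∀ x, Complex.exp (g x) = F x) ∧ g 0 = 0 := by
    intro m
    exact aux_log_ball hF hFne hF0 (by positivity : (0:ℝ) ≤ (m:ℝ)+1)
  choose g hg1 hg2 hg3 using hex
  have hagree : ∀ m n : ℕ, m ≤ n → ∀ x ∈ Metric.closedBall (0:E) (m+1), g m x = g n x := by
    intro m n hmn
    have hle : ((m:ℝ)+1) ≤ ((n:ℝ)+1) := by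
      have : (m:ℝ) ≤ (n:ℝ) := by exact_mod_cast hmn
      linarith
    apply aux_eqOn_exp (convex_closedBall (0:E) ((m:ℝ)+1)).isPreconnected (hg1 m)
      ((hg1 n).mono (Metric.closedBall_subset_closedBall hle))
      (fun x _ => by rw [hg2 m x, hg2 n x])
      (Metric.mem_closedBall_self (by positivity))
    rw [hg3 m, hg3 n]
  refine ⟨fun x => g ⌈‖x‖⌉₊ x, ?_, fun x => hg2 _ x, by simpa using hg3 _⟩
  rw [continuous_iff_continuousAt]
  intro x₀
  set n : ℕ := ⌈‖x₀‖⌉₊ + 2 with hndef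
  have hx₀mem : x₀ ∈ Metric.ball (0:E) n := by
    rw [Metric.mem_ball, dist_zero_right]
    have := Nat.le_ceil ‖x₀‖
    push_cast [hndef]
    linarith
  have hballnhds : Metric.ball (0:E) n ∈ nhds x₀ := Metric.isOpen_ball.mem_nhds hx₀mem
  have heq : ∀ y ∈ Metric.ball (0:E) n, g ⌈‖y‖⌉₊ y = g n y := by
    intro y hy
    rw [Metric.mem_ball, dist_zero_right] at hy
    apply hagree ⌈‖y‖⌉₊ n
    · exact Nat.ceil_le.mpr (by exact_mod_cast hy.le)
    · rw [Metric.mem_closedBall, dist_zero_right]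
      have := Nat.le_ceil ‖y‖
      push_cast
      linarith
  have hgncont : ContinuousAt (g n) x₀ := by
    apply (hg1 n).continuousAt
    apply Filter.mem_of_superset hballnhds
    intro y hy
    rw [Metric.mem_ball, dist_zero_right] at hy
    rw [Metric.mem_closedBall, dist_zero_right]
    push_cast at hy ⊢
    linarith
  apply hgncont.congr
  apply Filter.eventuallyEq_of_mem hballnhds
  intro y hy
  exact (heq y hy).symm

/-- Continuity of `s ↦ exp (s • Z) *ᵥ ξ`. -/
private lemma aux_cont_expm {d : ℕ} (Z : Matrix (Fin d) (Fin d) ℝ) (ξ : Fin d → ℝ) :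
    Continuous fun s : ℝ => (expm Z s).mulVec ξ := by
  letI : SeminormedRing (Matrix (Fin d) (Fin d) ℝ) := Matrix.linftyOpSemiNormedRing
  letI : NormedRing (Matrix (Fin d) (Fin d) ℝ) := Matrix.linftyOpNormedRing
  letI : NormedAlgebra ℝ (Matrix (Fin d) (Fin d) ℝ) := Matrix.linftyOpNormedAlgebra
  have h1 : Continuous fun s : ℝ => NormedSpace.exp (s • Z) := by
    have hc : Continuous (NormedSpace.exp : Matrix (Fin d) (Fin d) ℝ → Matrix (Fin d) (Fin d) ℝ) := by
      letI : NormedAlgebra ℚ (Matrix (Fin d) (Fin d) ℝ) := NormedAlgebra.restrictScalars ℚ ℝ _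
      exact NormedSpace.exp_continuous
    exact hc.comp (continuous_id.smul continuous_const)
  have h2 : Continuous fun A : Matrix (Fin d) (Fin d) ℝ => A.mulVec ξ := by
    let L : Matrix (Fin d) (Fin d) ℝ →ₗ[ℝ] (Fin d → ℝ) :=
      { toFun := fun A : Matrix (Fin d) (Fin d) ℝ => A.mulVec ξ
        map_add' := fun A B => Matrix.add_mulVec A B ξ
        map_smul' := fun c A => Matrix.smul_mulVec c A ξ }
    exact L.continuous_of_finiteDimensional
  exact h2.comp h1

/-- Semigroup property of `expm`. -/
private lemma aux_expm_add {d : ℕ} (Z : Matrix (Fin d) (Fin d) ℝ) (a b : ℝ) :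
    expm Z a * expm Z b = expm Z (a + b) := by
  rw [expm, expm, expm, add_smul]
  exact (Matrix.exp_add_of_commute _ _ (((Commute.refl Z).smul_left a).smul_right b)).symm

private lemma aux_expm_zero {d : ℕ} (Z : Matrix (Fin d) (Fin d) ℝ) : expm Z 0 = 1 := by
  rw [expm, zero_smul]
  exact NormedSpace.exp_zero

/-- Non-vanishing of `f`. -/
private lemma aux_nonvanish {d : ℕ} (Z : Matrix (Fin d) (Fin d) ℝ)
    (f : ℝ → (Fin d → ℝ) → ℂ)
    (hfcont : ContinuousOn (fun p : ℝ × (Fin d → ℝ) => f p.1 p.2) {p | 0 ≤ p.1})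
    (hfinit : ∀ ξ : Fin d → ℝ, f 0 ξ = 1)
    (hprod : ∀ s t : ℝ, 0 ≤ s → 0 ≤ t → ∀ ξ : Fin d → ℝ,
      f (t + s) ξ = f s ((expm Z t).mulVec ξ) * f t ξ) :
    ∀ t : ℝ, 0 ≤ t → ∀ ξ : Fin d → ℝ, f t ξ ≠ 0 := by
  intro t₀ ht₀ ξ₀ hzero
  rcases eq_or_lt_of_le ht₀ with rfl | ht₀pos
  · rw [hfinit ξ₀] at hzero
    exact one_ne_zero hzero
  have claim : ∀ n : ℕ, ∃ s : ℝ, 0 ≤ s ∧ s ≤ t₀ - t₀ / 2 ^ n ∧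
      f (t₀ / 2 ^ n) ((expm Z s).mulVec ξ₀) = 0 := by
    intro n
    induction n with
    | zero =>
      refine ⟨0, le_refl 0, by simp, ?_⟩
      rw [aux_expm_zero, Matrix.one_mulVec]
      simpa using hzero
    | succ n ih =>
      obtain ⟨s, hs0, hsle, hz⟩ := ih
      set t : ℝ := t₀ / 2 ^ (n + 1) with htdef
      have ht : 0 ≤ t := by positivity
      have htpos : 0 < t := by positivity
      have hsum : t + t = t₀ / 2 ^ n := by
        rw [htdef]
        field_simp
        ring
      have hp := hprod t t ht ht ((expm Z s).mulVec ξ₀)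
      rw [hsum] at hp
      rw [hp] at hz
      rcases mul_eq_zero.mp hz with h1 | h2
      · refine ⟨t + s, by positivity, ?_, ?_⟩
        · linarith
        · rw [← h1]
          congr 1
          rw [Matrix.mulVec_mulVec, aux_expm_add]
      · refine ⟨s, hs0, by linarith, h2⟩
  choose s hs0 hsle hszero using claim
  have hsmem : ∀ n, s n ∈ Set.Icc 0 t₀ := by
    intro n
    refine ⟨hs0 n, ?_⟩
    have : (0:ℝ) ≤ t₀ / 2 ^ n := by positivity
    linarith [hsle n]
  have hΦ : Continuous fun r : ℝ => (expm Z r).mulVec ξ₀ := aux_cont_expm Z ξ₀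
  have hKc : IsCompact ((fun r : ℝ => (expm Z r).mulVec ξ₀) '' Set.Icc 0 t₀) :=
    isCompact_Icc.image hΦ
  obtain ⟨η, hη, φ, hφmono, hφtend⟩ :=
    hKc.tendsto_subseq (fun n => Set.mem_image_of_mem _ (hsmem n))
  have htend1 : Filter.Tendsto (fun n : ℕ => t₀ / 2 ^ (φ n)) Filter.atTop (nhds 0) := by
    have h2 : Filter.Tendsto (fun m : ℕ => t₀ / 2 ^ m) Filter.atTop (nhds 0) := by
      have := (tendsto_pow_atTop_nhds_zero_of_lt_one
        (by norm_num : (0:ℝ) ≤ 2⁻¹) (by norm_num : (2:ℝ)⁻¹ < 1)).const_mul t₀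
      simpa [div_eq_mul_inv, inv_pow] using this
    exact h2.comp hφmono.tendsto_atTop
  have hptend : Filter.Tendsto
      (fun n : ℕ => ((t₀ / 2 ^ (φ n) : ℝ), (expm Z (s (φ n))).mulVec ξ₀)) Filter.atTop
      (nhdsWithin ((0 : ℝ), η) {p : ℝ × (Fin d → ℝ) | 0 ≤ p.1}) := by
    rw [tendsto_nhdsWithin_iff]
    constructor
    · exact htend1.prodMk_nhds hφtend
    · exact Filter.Eventually.of_forall (fun n => by
        simp only [Set.mem_setOf_eq]
        positivity)
  have hcw : ContinuousWithinAt (fun p : ℝ × (Fin d → ℝ) => f p.1 p.2)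
      {p : ℝ × (Fin d → ℝ) | 0 ≤ p.1} ((0 : ℝ), η) :=
    hfcont ((0 : ℝ), η) (by simp)
  have hlim := hcw.tendsto.comp hptend
  have hlim0 : Filter.Tendsto (fun _ : ℕ => (0 : ℂ)) Filter.atTop (nhds (f 0 η)) := by
    apply hlim.congr
    intro n
    exact hszero (φ n)
  have : f 0 η = 0 := tendsto_nhds_unique hlim0 tendsto_const_nhds
  rw [hfinit η] at this
  exact one_ne_zero this

end Aux

/-- `f_t` never vanishes and admits a unique jointly continuous logarithm `Ψ`
normalized by `Ψ_0(0) = 0`; moreover `Ψ_0 = 0` and `Ψ_t(0) = 0`. -/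
theorem stmt7 (d : ℕ) (hd : 0 < d) (Z : Matrix (Fin d) (Fin d) ℝ)
    (f : ℝ → (Fin d → ℝ) → ℂ)
    (hfcont : ContinuousOn (fun p : ℝ × (Fin d → ℝ) => f p.1 p.2) {p | 0 ≤ p.1})
    (hfinit : ∀ ξ : Fin d → ℝ, f 0 ξ = 1)
    (hfnorm : ∀ t : ℝ, 0 ≤ t → f t 0 = 1)
    (hprod : ∀ s t : ℝ, 0 ≤ s → 0 ≤ t → ∀ ξ : Fin d → ℝ,
      f (t + s) ξ = f s ((expm Z t).mulVec ξ) * f t ξ)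
    (hcf : ∀ t s : ℝ, 0 ≤ t → 0 ≤ s →
      ∃ ρ : Measure (Fin d → ℝ), IsProbabilityMeasure ρ ∧
        ∀ ξ : Fin d → ℝ, charFun ρ ξ = f t ((expm Z s).mulVec ξ)) :
    (∀ t : ℝ, 0 ≤ t → ∀ ξ : Fin d → ℝ, f t ξ ≠ 0) ∧
    ∃ Ψ : ℝ → (Fin d → ℝ) → ℂ,
      ContinuousOn (fun p : ℝ × (Fin d → ℝ) => Ψ p.1 p.2) {p | 0 ≤ p.1} ∧
      (∀ t : ℝ, 0 ≤ t → ∀ ξ : Fin d → ℝ, Complex.exp (Ψ t ξ) = f t ξ) ∧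
      Ψ 0 0 = 0 ∧
      (∀ ξ : Fin d → ℝ, Ψ 0 ξ = 0) ∧
      (∀ t : ℝ, 0 ≤ t → Ψ t 0 = 0) ∧
      (∀ Ψ' : ℝ → (Fin d → ℝ) → ℂ,
        ContinuousOn (fun p : ℝ × (Fin d → ℝ) => Ψ' p.1 p.2) {p | 0 ≤ p.1} →
        (∀ t : ℝ, 0 ≤ t → ∀ ξ : Fin d → ℝ, Complex.exp (Ψ' t ξ) = f t ξ) →
        Ψ' 0 0 = 0 →
        ∀ t : ℝ, 0 ≤ t → ∀ ξ : Fin d → ℝ, Ψ' t ξ = Ψ t ξ) := by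
  have hnv : ∀ t : ℝ, 0 ≤ t → ∀ ξ : Fin d → ℝ, f t ξ ≠ 0 :=
    aux_nonvanish Z f hfcont hfinit hprod
  refine ⟨hnv, ?_⟩
  -- extend f to a continuous non-vanishing function on all of ℝ × ℝ^d
  set F : ℝ × (Fin d → ℝ) → ℂ :=
    (fun p : ℝ × (Fin d → ℝ) => f p.1 p.2) ∘ (fun p => (max p.1 0, p.2)) with hFdef
  have hFcont : Continuous F := by
    apply hfcont.comp_continuous
    · exact (continuous_fst.max continuous_const).prodMk continuous_snd
    · intro p
      exact le_max_right p.1 0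
  have hFne : ∀ p, F p ≠ 0 := fun p => hnv _ (le_max_right p.1 0) p.2
  have hF0 : F 0 = 1 := by
    have : F 0 = f (max (0:ℝ) 0) 0 := rfl
    rw [this, max_self]
    exact hfnorm 0 le_rfl
  have hFeq : ∀ t : ℝ, 0 ≤ t → ∀ ξ, F (t, ξ) = f t ξ := by
    intro t ht ξ
    have : F (t, ξ) = f (max t 0) ξ := rfl
    rw [this, max_eq_left ht]
  obtain ⟨G, hGcont, hGexp, hG0⟩ := aux_global_log hFcont hFne hF0
  refine ⟨fun t ξ => G (t, ξ), ?_, ?_, ?_, ?_, ?_, ?_⟩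
  · exact hGcont.continuousOn
  · intro t ht ξ
    rw [hGexp (t, ξ), hFeq t ht ξ]
  · exact hG0
  · -- Ψ 0 ξ = 0 for all ξ
    intro ξ
    have := aux_eqOn_exp (isPreconnected_univ (α := Fin d → ℝ))
      (g := fun ξ => G (0, ξ)) (h := fun _ => 0)
      (hGcont.comp (Continuous.prodMk_right 0)).continuousOn continuousOn_const
      (fun ξ _ => by
        rw [hGexp (0, ξ), hFeq 0 le_rfl ξ, hfinit ξ, Complex.exp_zero])
      (Set.mem_univ (0 : Fin d → ℝ)) hG0
    exact this ξ (Set.mem_univ ξ)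
  · -- Ψ t 0 = 0 for all t ≥ 0
    intro t ht
    have := aux_eqOn_exp (isPreconnected_Ici (a := (0:ℝ)))
      (g := fun t => G (t, 0)) (h := fun _ => 0)
      (hGcont.comp (continuous_id.prodMk continuous_const)).continuousOn continuousOn_const
      (fun r hr => by
        rw [hGexp (r, 0), hFeq r hr 0, hfnorm r hr, Complex.exp_zero])
      (Set.self_mem_Ici (a := (0:ℝ))) hG0
    exact this t ht
  · -- uniqueness
    intro Ψ' hΨ'cont hΨ'exp hΨ'0 t ht ξ
    have hconv : Convex ℝ {p : ℝ × (Fin d → ℝ) | 0 ≤ p.1} := by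
      intro x hx y hy a b ha hb hab
      simp only [Set.mem_setOf_eq] at hx hy ⊢
      have : (a • x + b • y).1 = a * x.1 + b * y.1 := rfl
      rw [this]
      exact add_nonneg (mul_nonneg ha hx) (mul_nonneg hb hy)
    have := aux_eqOn_exp hconv.isPreconnected
      (g := fun p : ℝ × (Fin d → ℝ) => Ψ' p.1 p.2)
      (h := fun p : ℝ × (Fin d → ℝ) => G (p.1, p.2))
      hΨ'cont hGcont.continuousOn
      (fun p hp => by
        rw [hΨ'exp p.1 hp p.2, hGexp (p.1, p.2), hFeq p.1 hp p.2])
      (show ((0:ℝ), (0 : Fin d → ℝ)) ∈ {p : ℝ × (Fin d → ℝ) | 0 ≤ p.1} by simp)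
      (by show Ψ' 0 0 = G ((0:ℝ), (0 : Fin d → ℝ)); rw [hΨ'0]; exact hG0.symm)
    exact this (t, ξ) ht
end

section
/- Let Z be a real d×d matrix, σ a real antisymmetric d×d matrix, A a real symmetric d×d matrix, and set B := (1/2)(σZ − Zᵀσᵀ). If A ± iB ⪰ 0, then for every t ≥ 0 one has A_t ± (i/2)(S_tᵀ σ S_t − σ) ⪰ 0, where S_t := exp(tZ) and A_t := ∫₀ᵗ S_τᵀ A S_τ dτ. -/
open MeasureTheory Matrix Filter ComplexOrder

section Auxiliary

open NormedSpace intervalIntegral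

attribute [local instance] Matrix.linftyOpNormedRing Matrix.linftyOpNormedAlgebra

variable {d : ℕ}

@[reducible] noncomputable def matTop : TopologicalSpace (Matrix (Fin d) (Fin d) ℝ) :=
  (Matrix.linftyOpNormedRing : NormedRing (Matrix (Fin d) (Fin d) ℝ)).toPseudoMetricSpace.toUniformSpace.toTopologicalSpace

attribute [local instance] matTop

noncomputable def transCLM : Matrix (Fin d) (Fin d) ℝ →L[ℝ] Matrix (Fin d) (Fin d) ℝ :=
  LinearMap.toContinuousLinearMap (Matrix.transposeLinearEquiv (Fin d) (Fin d) ℝ ℝ).toLinearMap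

noncomputable def entryCLM (i j : Fin d) : Matrix (Fin d) (Fin d) ℝ →L[ℝ] ℝ :=
  LinearMap.toContinuousLinearMap
    (Matrix.entryLinearMap ℝ ℝ i j)

lemma entryCLM_apply (i j : Fin d) (M : Matrix (Fin d) (Fin d) ℝ) : entryCLM i j M = M i j := rfl

lemma expm_continuous (Z : Matrix (Fin d) (Fin d) ℝ) : Continuous (expm Z) :=
  Differentiable.continuous
    (fun τ => (hasDerivAt_exp_smul_const' (𝕂 := ℝ) Z τ).differentiableAt)

lemma hasDerivAt_qform (Z σ : Matrix (Fin d) (Fin d) ℝ) (t : ℝ) :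
    HasDerivAt (fun τ => (expm Z τ)ᵀ * σ * expm Z τ)
      ((expm Z t)ᵀ * (Zᵀ * σ + σ * Z) * expm Z t) t := by
  have hS : HasDerivAt (expm Z) (Z * expm Z t) t := hasDerivAt_exp_smul_const' (𝕂 := ℝ) Z t
  have hT : HasDerivAt (fun τ => (expm Z τ)ᵀ) ((Z * expm Z t)ᵀ) t :=
    ((transCLM (d := d)).hasFDerivAt.comp_hasDerivAt t hS)
  have := ((hT.mul_const σ).mul hS)
  convert this using 1
  · rfl
  · rfl
  · rfl
  · simp [Matrix.transpose_mul, Matrix.mul_add, Matrix.add_mul, mul_assoc]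

lemma continuous_sandwich_entry (Z W : Matrix (Fin d) (Fin d) ℝ) (i j : Fin d) :
    Continuous (fun τ => ((expm Z τ)ᵀ * W * expm Z τ) i j) := by
  have hcont : Continuous (fun τ => (expm Z τ)ᵀ * W * expm Z τ) :=
    (((transCLM (d := d)).continuous.comp (expm_continuous Z)).mul continuous_const).mul
      (expm_continuous Z)
  exact (entryCLM i j).continuous.comp hcont

lemma sandwich_integral_entry (Z σ : Matrix (Fin d) (Fin d) ℝ) (t : ℝ) (i j : Fin d) :
    ((expm Z t)ᵀ * σ * expm Z t - σ) i j
      = ∫ τ in (0:ℝ)..t, ((expm Z τ)ᵀ * (Zᵀ * σ + σ * Z) * expm Z τ) i j := by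
  have hcont' : Continuous (fun τ => (expm Z τ)ᵀ * (Zᵀ * σ + σ * Z) * expm Z τ) :=
    (((transCLM (d := d)).continuous.comp (expm_continuous Z)).mul continuous_const).mul
      (expm_continuous Z)
  have hint : IntervalIntegrable (fun τ => (expm Z τ)ᵀ * (Zᵀ * σ + σ * Z) * expm Z τ)
      MeasureTheory.volume 0 t := hcont'.intervalIntegrable 0 t
  have hFTC : (∫ τ in (0:ℝ)..t, (expm Z τ)ᵀ * (Zᵀ * σ + σ * Z) * expm Z τ)
      = (expm Z t)ᵀ * σ * expm Z t - ((expm Z 0)ᵀ * σ * expm Z 0) :=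
    intervalIntegral.integral_eq_sub_of_hasDerivAt (fun τ _ => hasDerivAt_qform Z σ τ) hint
  have h0 : expm Z 0 = 1 := by simp [expm, NormedSpace.exp_zero]
  show _ = ∫ τ in (0:ℝ)..t, entryCLM i j ((expm Z τ)ᵀ * (Zᵀ * σ + σ * Z) * expm Z τ)
  rw [(entryCLM i j).intervalIntegral_comp_comm hint, hFTC, h0]
  simp [entryCLM_apply]

end Auxiliary

lemma complex_integral_nonneg {α : Type*} [MeasurableSpace α] (μ : Measure α) (g : α → ℂ)
    (h : ∀ a, 0 ≤ g a) : 0 ≤ ∫ a, g a ∂μ := by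
  by_cases hg : Integrable g μ
  · rw [Complex.nonneg_iff]
    refine ⟨?_, ?_⟩
    · have := integral_re (μ := μ) hg
      simp only [RCLike.re_to_complex] at this
      rw [← this]
      exact integral_nonneg fun a => (Complex.nonneg_iff.1 (h a)).1
    · have := integral_im (μ := μ) hg
      simp only [RCLike.im_to_complex] at this
      rw [← this]
      have : ∀ a, (g a).im = 0 := fun a => ((Complex.nonneg_iff.1 (h a)).2).symm
      simp [this]
  · rw [integral_undef hg]

open intervalIntegral in
lemma psd_intervalIntegral {d : ℕ} {t : ℝ} (ht : 0 ≤ t) (M : ℝ → Matrix (Fin d) (Fin d) ℂ)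
    (hpsd : ∀ τ, (M τ).PosSemidef)
    (hint : ∀ i j, IntervalIntegrable (fun τ => M τ i j) volume 0 t) :
    (Matrix.of fun i j => ∫ τ in (0:ℝ)..t, M τ i j).PosSemidef := by
  rw [Matrix.posSemidef_iff_dotProduct_mulVec]
  constructor
  · ext i j
    simp only [Matrix.conjTranspose_apply, Matrix.of_apply, RCLike.star_def]
    rw [integral_of_le ht, integral_of_le ht, ← integral_conj]
    congr 1
    ext τ
    exact (hpsd τ).1.apply i j
  · intro x
    have hg : ∀ τ, (star x ⬝ᵥ (M τ).mulVec x) = ∑ i, ∑ j, star (x i) * (M τ i j * x j) := by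
      intro τ
      simp [dotProduct, Matrix.mulVec, Finset.mul_sum]
    have hint2 : ∀ i j, IntervalIntegrable (fun τ => star (x i) * (M τ i j * x j)) volume 0 t :=
      fun i j => ((hint i j).mul_const _).const_mul _
    have e1 : (∫ τ in (0:ℝ)..t, star x ⬝ᵥ (M τ).mulVec x)
        = ∑ i, ∑ j, star (x i) * ((∫ τ in (0:ℝ)..t, M τ i j) * x j) := by
      calc (∫ τ in (0:ℝ)..t, star x ⬝ᵥ (M τ).mulVec x)
          = ∫ τ in (0:ℝ)..t, ∑ i, ∑ j, star (x i) * (M τ i j * x j) := by simp_rw [hg]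
        _ = ∑ i, ∫ τ in (0:ℝ)..t, ∑ j, star (x i) * (M τ i j * x j) := by
            refine intervalIntegral.integral_finset_sum (fun i _ => ?_)
            have h3 := IntervalIntegrable.sum (μ := volume) (a := 0) (b := t)
              (f := fun j τ => star (x i) * (M τ i j * x j)) Finset.univ (fun j _ => hint2 i j)
            have e : (∑ j : Fin d, fun τ => star (x i) * (M τ i j * x j))
                = fun τ => ∑ j : Fin d, star (x i) * (M τ i j * x j) := by
              ext τ; simp
            rwa [e] at h3
        _ = ∑ i, ∑ j, ∫ τ in (0:ℝ)..t, star (x i) * (M τ i j * x j) :=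
            Finset.sum_congr rfl fun i _ =>
              intervalIntegral.integral_finset_sum
                (f := fun j τ => star (x i) * (M τ i j * x j)) (fun j _ => hint2 i j)
        _ = ∑ i, ∑ j, star (x i) * ((∫ τ in (0:ℝ)..t, M τ i j) * x j) := by
            refine Finset.sum_congr rfl fun i _ => Finset.sum_congr rfl fun j _ => ?_
            rw [intervalIntegral.integral_const_mul, intervalIntegral.integral_mul_const]
    have e2 : star x ⬝ᵥ (Matrix.of fun i j => ∫ τ in (0:ℝ)..t, M τ i j : Matrix _ _ ℂ).mulVec x
        = ∑ i, ∑ j, star (x i) * ((∫ τ in (0:ℝ)..t, M τ i j) * x j) := by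
      simp [dotProduct, Matrix.mulVec, Finset.mul_sum]
    rw [e2, ← e1, integral_of_le ht]
    exact complex_integral_nonneg _ _ fun τ => (hpsd τ).dotProduct_mulVec_nonneg x

lemma conjTranspose_map_ofReal {d : ℕ} (S : Matrix (Fin d) (Fin d) ℝ) :
    (S.map Complex.ofReal)ᴴ = Sᵀ.map Complex.ofReal := by
  ext i j
  simp [Matrix.conjTranspose_apply, Matrix.map_apply, Complex.conj_ofReal]

open intervalIntegral in
lemma main_aux {d : ℕ} (Z σ A : Matrix (Fin d) (Fin d) ℝ) (c : ℂ)
    (hpos : (A.map Complex.ofReal +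
      c • (((1/2 : ℝ) • (Zᵀ * σ + σ * Z)).map Complex.ofReal)).PosSemidef)
    {t : ℝ} (ht : 0 ≤ t) :
    ((Matrix.of fun i j =>
        ∫ τ in (0:ℝ)..t, ((expm Z τ)ᵀ * A * expm Z τ) i j).map Complex.ofReal +
      (c / 2) • (((expm Z t)ᵀ * σ * expm Z t - σ).map Complex.ofReal)).PosSemidef := by
  set B' : Matrix (Fin d) (Fin d) ℝ := (1/2 : ℝ) • (Zᵀ * σ + σ * Z) with hB'
  set C : Matrix (Fin d) (Fin d) ℂ := A.map Complex.ofReal + c • (B'.map Complex.ofReal) with hC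
  set N : ℝ → Matrix (Fin d) (Fin d) ℂ := fun τ =>
    ((expm Z τ).map Complex.ofReal)ᴴ * C * ((expm Z τ).map Complex.ofReal) with hN
  have hNpsd : ∀ τ, (N τ).PosSemidef := fun τ =>
    hpos.conjTranspose_mul_mul_same _
  have hofRealHom : (Complex.ofReal : ℝ → ℂ) = ⇑Complex.ofRealHom := rfl
  have hN_eq : ∀ τ, N τ = ((expm Z τ)ᵀ * A * expm Z τ).map Complex.ofReal +
      c • (((expm Z τ)ᵀ * B' * expm Z τ).map Complex.ofReal) := by
    intro τ
    rw [hN]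
    simp only []
    rw [conjTranspose_map_ofReal, hC, Matrix.mul_add, Matrix.add_mul, Matrix.mul_smul,
      Matrix.smul_mul, hofRealHom, ← Matrix.map_mul, ← Matrix.map_mul, ← Matrix.map_mul,
      ← Matrix.map_mul]
  have hN_entry : ∀ τ i j, N τ i j =
      ((((expm Z τ)ᵀ * A * expm Z τ) i j : ℝ) : ℂ) +
        c * ((((expm Z τ)ᵀ * B' * expm Z τ) i j : ℝ) : ℂ) := by
    intro τ i j
    rw [hN_eq τ]
    simp [Matrix.add_apply, Matrix.smul_apply, Matrix.map_apply, smul_eq_mul]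
  have hAcont : ∀ i j, Continuous fun τ => ((expm Z τ)ᵀ * A * expm Z τ) i j :=
    fun i j => continuous_sandwich_entry Z A i j
  have hBcont : ∀ i j, Continuous fun τ => ((expm Z τ)ᵀ * B' * expm Z τ) i j :=
    fun i j => continuous_sandwich_entry Z B' i j
  have hNint : ∀ i j, IntervalIntegrable (fun τ => N τ i j) volume 0 t := by
    intro i j
    have : Continuous fun τ => N τ i j := by
      simp_rw [hN_entry]
      exact (Complex.continuous_ofReal.comp (hAcont i j)).add
        (continuous_const.mul (Complex.continuous_ofReal.comp (hBcont i j)))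
    exact this.intervalIntegrable 0 t
  have hmain := psd_intervalIntegral ht N hNpsd hNint
  have hentry : ∀ i j,
      ((Matrix.of fun i j =>
          ∫ τ in (0:ℝ)..t, ((expm Z τ)ᵀ * A * expm Z τ) i j).map Complex.ofReal +
        (c / 2) • (((expm Z t)ᵀ * σ * expm Z t - σ).map Complex.ofReal)) i j
      = (Matrix.of fun i j => ∫ τ in (0:ℝ)..t, N τ i j) i j := by
    intro i j
    have hΔ : ((expm Z t)ᵀ * σ * expm Z t - σ) i j
        = 2 * ∫ τ in (0:ℝ)..t, ((expm Z τ)ᵀ * B' * expm Z τ) i j := by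
      rw [sandwich_integral_entry Z σ t i j]
      rw [← intervalIntegral.integral_const_mul]
      congr 1
      ext τ
      have : (expm Z τ)ᵀ * (Zᵀ * σ + σ * Z) * expm Z τ
          = (2:ℝ) • ((expm Z τ)ᵀ * B' * expm Z τ) := by
        rw [hB', Matrix.mul_smul, Matrix.smul_mul, smul_smul]
        norm_num
      rw [this]
      simp [Matrix.smul_apply]
    simp only [Matrix.add_apply, Matrix.smul_apply, Matrix.map_apply, Matrix.of_apply,
      smul_eq_mul]
    rw [hΔ]
    have hi1 : IntervalIntegrable
        (fun τ => ((((expm Z τ)ᵀ * A * expm Z τ) i j : ℝ) : ℂ)) volume 0 t :=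
      (Complex.continuous_ofReal.comp (hAcont i j)).intervalIntegrable 0 t
    have hi2 : IntervalIntegrable
        (fun τ => c * ((((expm Z τ)ᵀ * B' * expm Z τ) i j : ℝ) : ℂ)) volume 0 t :=
      (continuous_const.mul
        (Complex.continuous_ofReal.comp (hBcont i j))).intervalIntegrable 0 t
    calc ((∫ τ in (0:ℝ)..t, ((expm Z τ)ᵀ * A * expm Z τ) i j : ℝ) : ℂ) +
          c / 2 * ((2 * ∫ τ in (0:ℝ)..t, ((expm Z τ)ᵀ * B' * expm Z τ) i j : ℝ) : ℂ)
        = ((∫ τ in (0:ℝ)..t, ((expm Z τ)ᵀ * A * expm Z τ) i j : ℝ) : ℂ) +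
          c * ((∫ τ in (0:ℝ)..t, ((expm Z τ)ᵀ * B' * expm Z τ) i j : ℝ) : ℂ) := by
          push_cast
          ring
      _ = (∫ τ in (0:ℝ)..t, ((((expm Z τ)ᵀ * A * expm Z τ) i j : ℝ) : ℂ)) +
          c * (∫ τ in (0:ℝ)..t, ((((expm Z τ)ᵀ * B' * expm Z τ) i j : ℝ) : ℂ)) := by
          rw [intervalIntegral.integral_ofReal, intervalIntegral.integral_ofReal]
      _ = (∫ τ in (0:ℝ)..t, ((((expm Z τ)ᵀ * A * expm Z τ) i j : ℝ) : ℂ)) +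
          (∫ τ in (0:ℝ)..t, c * ((((expm Z τ)ᵀ * B' * expm Z τ) i j : ℝ) : ℂ)) := by
          rw [intervalIntegral.integral_const_mul]
      _ = ∫ τ in (0:ℝ)..t, N τ i j := by
          rw [← intervalIntegral.integral_add hi1 hi2]
          congr 1
          ext τ
          rw [hN_entry τ i j]
  have : ((Matrix.of fun i j =>
        ∫ τ in (0:ℝ)..t, ((expm Z τ)ᵀ * A * expm Z τ) i j).map Complex.ofReal +
      (c / 2) • (((expm Z t)ᵀ * σ * expm Z t - σ).map Complex.ofReal))
      = (Matrix.of fun i j => ∫ τ in (0:ℝ)..t, N τ i j) := by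
    ext i j
    exact hentry i j
  rw [this]
  exact hmain

/-- if `A ± iB ⪰ 0` with `B = (1/2)(σZ − Zᵀσᵀ)`, then for every `t ≥ 0`
`A_t ± (i/2)(S_tᵀ σ S_t − σ) ⪰ 0`, where `A_t = ∫₀ᵗ S_τᵀ A S_τ dτ`. -/
theorem stmt14 (d : ℕ) (hd : 0 < d) (Z σ : Matrix (Fin d) (Fin d) ℝ) (hσ : σᵀ = -σ)
    (A : Matrix (Fin d) (Fin d) ℝ) (hA : A.IsSymm)
    (hpos : (A.map Complex.ofReal +
        Complex.I • (((1/2 : ℝ) • (σ * Z - Zᵀ * σᵀ)).map Complex.ofReal)).PosSemidef ∧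
      (A.map Complex.ofReal -
        Complex.I • (((1/2 : ℝ) • (σ * Z - Zᵀ * σᵀ)).map Complex.ofReal)).PosSemidef) :
    ∀ t : ℝ, 0 ≤ t →
      ((Matrix.of fun i j =>
          ∫ τ in (0:ℝ)..t, ((expm Z τ)ᵀ * A * expm Z τ) i j).map Complex.ofReal +
        (Complex.I / 2) •
          (((expm Z t)ᵀ * σ * expm Z t - σ).map Complex.ofReal)).PosSemidef ∧
      ((Matrix.of fun i j =>
          ∫ τ in (0:ℝ)..t, ((expm Z τ)ᵀ * A * expm Z τ) i j).map Complex.ofReal -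
        (Complex.I / 2) •
          (((expm Z t)ᵀ * σ * expm Z t - σ).map Complex.ofReal)).PosSemidef := by
  intro t ht
  have hB : (1/2 : ℝ) • (σ * Z - Zᵀ * σᵀ) = (1/2 : ℝ) • (Zᵀ * σ + σ * Z) := by
    rw [hσ]
    simp [Matrix.mul_neg, sub_neg_eq_add]
    ring_nf
    rw [add_comm]
  rw [hB] at hpos
  obtain ⟨hp, hm⟩ := hpos
  constructor
  · exact main_aux Z σ A Complex.I hp ht
  · have hm' : (A.map Complex.ofReal +
        (-Complex.I) • (((1/2 : ℝ) • (Zᵀ * σ + σ * Z)).map Complex.ofReal)).PosSemidef := by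
      rwa [neg_smul, ← sub_eq_add_neg]
    have := main_aux Z σ A (-Complex.I) hm' ht
    rw [neg_div] at this
    rwa [neg_smul, ← sub_eq_add_neg] at this
end

section
/- Let Z be a real d×d matrix such that |exp(tZ) ξ| ≤ e^{−ct} |ξ| for all t ≥ 0 and ξ ∈ ℝ^d, for some constant c > 0. Let ψ be the Lévy symbol associated to α ∈ ℝ^d, a real symmetric positive semidefinite d×d matrix A, and a Lévy measure ν on ℝ^d satisfying ∫_{|η|>1} ln|η| ν(dη) < ∞. Let μ₀ be any probability measure on ℝ^d. Then for every ξ ∈ ℝ^d, lim_{t→∞} exp( ∫₀ᵗ ψ(exp(τZ) ξ) dτ ) · charFun(μ₀)(exp(tZ) ξ) = exp( ∫₀^∞ ψ(exp(τZ) ξ) dτ ); in particular the limit does not depend on μ₀. -/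
open MeasureTheory Matrix Filter ComplexOrder

/-! ### Auxiliary lemmas -/

open Set intervalIntegral in
private lemma norm_cexp_I_mul_sub_one (x : ℝ) :
    ‖Complex.exp (Complex.I * x) - 1‖ ≤ |x| := by
  have key : Complex.exp (Complex.I * x) - 1
      = ∫ s in (0:ℝ)..x, Complex.I * Complex.exp (Complex.I * s) := by
    have hd : ∀ s : ℝ, HasDerivAt (fun s : ℝ => Complex.exp (Complex.I * s))
        (Complex.I * Complex.exp (Complex.I * s)) s := by
      intro s
      have h1 : HasDerivAt (fun s : ℝ => (Complex.I * s : ℂ)) Complex.I s := by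
        simpa using (Complex.ofRealCLM.hasDerivAt (x := s)).const_mul Complex.I
      simpa [mul_comm] using h1.cexp
    rw [integral_eq_sub_of_hasDerivAt (fun s _ => hd s) ?_]
    · simp
    · exact (continuous_const.mul (by continuity :
        Continuous fun s : ℝ => Complex.exp (Complex.I * s))).intervalIntegrable 0 x
  rw [key]
  have := intervalIntegral.norm_integral_le_of_norm_le_const
    (C := 1) (f := fun s : ℝ => Complex.I * Complex.exp (Complex.I * s)) (a := 0) (b := x) ?_
  · simpa using this
  · intro s _
    simp [Complex.norm_exp]

open Set intervalIntegral in
private lemma norm_cexp_I_mul_sub_one_sub (x : ℝ) :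
    ‖Complex.exp (Complex.I * x) - 1 - Complex.I * x‖ ≤ x ^ 2 := by
  have key : Complex.exp (Complex.I * x) - 1 - Complex.I * x
      = ∫ s in (0:ℝ)..x, (Complex.I * Complex.exp (Complex.I * s) - Complex.I) := by
    have hd : ∀ s : ℝ, HasDerivAt
        (fun s : ℝ => Complex.exp (Complex.I * s) - 1 - Complex.I * s)
        (Complex.I * Complex.exp (Complex.I * s) - Complex.I) s := by
      intro s
      have h1 : HasDerivAt (fun s : ℝ => (Complex.I * s : ℂ)) Complex.I s := by
        simpa using (Complex.ofRealCLM.hasDerivAt (x := s)).const_mul Complex.I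
      have h2 := ((h1.cexp).sub_const 1).sub h1
      exact h2.congr_deriv (by ring)
    rw [integral_eq_sub_of_hasDerivAt (fun s _ => hd s) ?_]
    · simp
    · exact ((continuous_const.mul (by continuity :
        Continuous fun s : ℝ => Complex.exp (Complex.I * s))).sub
          continuous_const).intervalIntegrable 0 x
  rw [key]
  have := intervalIntegral.norm_integral_le_of_norm_le_const
    (C := |x|) (f := fun s : ℝ => Complex.I * Complex.exp (Complex.I * s) - Complex.I)
    (a := 0) (b := x) ?_
  · calc ‖∫ s in (0:ℝ)..x, (Complex.I * Complex.exp (Complex.I * s) - Complex.I)‖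
        ≤ |x| * |x - 0| := this
      _ = x ^ 2 := by rw [sub_zero, ← abs_mul, ← sq, abs_sq]
  · intro s hs
    have heq : Complex.I * Complex.exp (Complex.I * s) - Complex.I
        = Complex.I * (Complex.exp (Complex.I * s) - 1) := by ring
    rw [heq]
    have h2 := norm_cexp_I_mul_sub_one s
    have hsx : |s| ≤ |x| := by
      rw [Set.uIoc_eq_union] at hs
      rcases hs with h | h
      · rcases h with ⟨h1, h2'⟩
        rw [abs_of_pos h1]
        exact le_trans h2' (le_abs_self x)
      · rcases h with ⟨h1, h2'⟩
        rw [abs_of_nonpos h2']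
        exact le_trans (neg_le_neg h1.le) (neg_le_abs x)
    calc ‖Complex.I * (Complex.exp (Complex.I * s) - 1)‖
        = ‖Complex.exp (Complex.I * s) - 1‖ := by rw [norm_mul]; simp
      _ ≤ |s| := h2
      _ ≤ |x| := hsx

private lemma eucNorm_nonneg {d : ℕ} (x : Fin d → ℝ) : 0 ≤ eucNorm x := Real.sqrt_nonneg _

private lemma abs_apply_le_eucNorm {d : ℕ} (x : Fin d → ℝ) (i : Fin d) : |x i| ≤ eucNorm x := by
  rw [← Real.sqrt_sq_eq_abs]
  exact Real.sqrt_le_sqrt (Finset.single_le_sum (fun j _ => sq_nonneg (x j)) (Finset.mem_univ i))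

private lemma continuous_eucNorm {d : ℕ} : Continuous (eucNorm (d := d)) :=
  Real.continuous_sqrt.comp (continuous_finset_sum _ fun i _ => (continuous_apply i).pow 2)

private lemma abs_dotProduct_le {d : ℕ} (x y : Fin d → ℝ) :
    |x ⬝ᵥ y| ≤ (d : ℝ) * eucNorm x * eucNorm y := by
  calc |x ⬝ᵥ y| ≤ ∑ i, |x i * y i| := Finset.abs_sum_le_sum_abs _ _
    _ ≤ ∑ _i : Fin d, eucNorm x * eucNorm y := by
        refine Finset.sum_le_sum fun i _ => ?_
        rw [abs_mul]
        exact mul_le_mul (abs_apply_le_eucNorm x i) (abs_apply_le_eucNorm y i)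
          (abs_nonneg _) (eucNorm_nonneg x)
    _ = (d : ℝ) * eucNorm x * eucNorm y := by
        rw [Finset.sum_const, Finset.card_univ, Fintype.card_fin, nsmul_eq_mul, mul_assoc]

private lemma abs_dotProduct_mulVec_le {d : ℕ} (x : Fin d → ℝ) (A : Matrix (Fin d) (Fin d) ℝ) :
    |x ⬝ᵥ A.mulVec x| ≤ (∑ i, ∑ j, |A i j|) * eucNorm x ^ 2 := by
  calc |x ⬝ᵥ A.mulVec x| ≤ ∑ i, |x i * A.mulVec x i| := Finset.abs_sum_le_sum_abs _ _
    _ ≤ ∑ i, ∑ j, |A i j| * eucNorm x ^ 2 := by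
        refine Finset.sum_le_sum fun i _ => ?_
        rw [abs_mul]
        calc |x i| * |A.mulVec x i| ≤ eucNorm x * ∑ j, |A i j| * eucNorm x := by
              refine mul_le_mul (abs_apply_le_eucNorm x i) ?_ (abs_nonneg _) (eucNorm_nonneg x)
              calc |A.mulVec x i| ≤ ∑ j, |A i j * x j| := by
                    rw [Matrix.mulVec, dotProduct]
                    exact Finset.abs_sum_le_sum_abs _ _
                _ ≤ ∑ j, |A i j| * eucNorm x := by
                    refine Finset.sum_le_sum fun j _ => ?_
                    rw [abs_mul]
                    exact mul_le_mul_of_nonneg_left (abs_apply_le_eucNorm x j) (abs_nonneg _)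
          _ = ∑ j, |A i j| * eucNorm x ^ 2 := by rw [Finset.mul_sum]; congr 1; ext j; ring
    _ = (∑ i, ∑ j, |A i j|) * eucNorm x ^ 2 := by
        rw [Finset.sum_mul]; congr 1; ext i; rw [Finset.sum_mul]

/-- The set of "small jumps". -/
def lsSmall (d : ℕ) : Set (Fin d → ℝ) := {η : Fin d → ℝ | eucNorm η < 1}

private lemma measurableSet_lsSmall {d : ℕ} : MeasurableSet (lsSmall d) :=
  measurableSet_lt continuous_eucNorm.measurable measurable_const

private lemma lsSmall_compl {d : ℕ} : (lsSmall d)ᶜ = {η : Fin d → ℝ | 1 ≤ eucNorm η} := by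
  ext η; simp [lsSmall, not_lt]

private lemma continuous_dotProduct_left {d : ℕ} (y : Fin d → ℝ) :
    Continuous fun x : Fin d → ℝ => x ⬝ᵥ y :=
  continuous_finset_sum _ fun i _ => (continuous_apply i).mul continuous_const

private lemma continuous_dotProduct_right {d : ℕ} (y : Fin d → ℝ) :
    Continuous fun x : Fin d → ℝ => y ⬝ᵥ x :=
  continuous_finset_sum _ fun i _ => continuous_const.mul (continuous_apply i)

/-- The integrand of the Lévy symbol. -/
noncomputable def lsInt {d : ℕ} (ξ η : Fin d → ℝ) : ℂ :=
  Complex.exp (Complex.I * ((η ⬝ᵥ ξ : ℝ) : ℂ)) - 1 -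
      Complex.I * (((lsSmall d).indicator (fun η' => η' ⬝ᵥ ξ) η : ℝ) : ℂ)

private lemma aesm_lsInt {d : ℕ} (ν : Measure (Fin d → ℝ)) (ξ : Fin d → ℝ) :
    AEStronglyMeasurable (lsInt ξ) ν := by
  unfold lsInt
  apply AEStronglyMeasurable.sub
  · apply Continuous.aestronglyMeasurable
    exact (Complex.continuous_exp.comp (continuous_const.mul (Complex.continuous_ofReal.comp
      (continuous_dotProduct_left ξ)))).sub continuous_const
  · apply Measurable.aestronglyMeasurable
    exact (Complex.measurable_ofReal.comp
      (((continuous_dotProduct_left ξ).measurable).indicator measurableSet_lsSmall)).const_mul _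

private lemma norm_lsInt_le_small {d : ℕ} (ξ η : Fin d → ℝ) (hη : η ∈ lsSmall d) :
    ‖lsInt ξ η‖ ≤ (d : ℝ) ^ 2 * eucNorm ξ ^ 2 * eucNorm η ^ 2 := by
  unfold lsInt
  rw [Set.indicator_of_mem hη]
  calc ‖Complex.exp (Complex.I * ((η ⬝ᵥ ξ : ℝ) : ℂ)) - 1 - Complex.I * ((η ⬝ᵥ ξ : ℝ) : ℂ)‖
      ≤ (η ⬝ᵥ ξ) ^ 2 := norm_cexp_I_mul_sub_one_sub _
    _ ≤ ((d : ℝ) * eucNorm η * eucNorm ξ) ^ 2 := by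
        rw [← sq_abs (η ⬝ᵥ ξ)]
        exact pow_le_pow_left₀ (abs_nonneg _) (abs_dotProduct_le η ξ) 2
    _ = (d : ℝ) ^ 2 * eucNorm ξ ^ 2 * eucNorm η ^ 2 := by ring

private lemma norm_lsInt_le_big {d : ℕ} (ξ η : Fin d → ℝ) (hη : η ∉ lsSmall d) :
    ‖lsInt ξ η‖ ≤ min 2 ((d : ℝ) * eucNorm η * eucNorm ξ) := by
  unfold lsInt
  rw [Set.indicator_of_notMem hη]
  simp only [Complex.ofReal_zero, mul_zero, sub_zero]
  rw [le_min_iff]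
  constructor
  · calc ‖Complex.exp (Complex.I * ((η ⬝ᵥ ξ : ℝ) : ℂ)) - 1‖
        ≤ ‖Complex.exp (Complex.I * ((η ⬝ᵥ ξ : ℝ) : ℂ))‖ + ‖(1:ℂ)‖ := norm_sub_le _ _
      _ ≤ 2 := by
        rw [mul_comm Complex.I, Complex.norm_exp_ofReal_mul_I]; norm_num
  · exact le_trans (norm_cexp_I_mul_sub_one _) (abs_dotProduct_le η ξ)

private lemma integrable_sq_on_lsSmall {d : ℕ} {ν : Measure (Fin d → ℝ)}
    (h1 : (∫⁻ η in lsSmall d, ENNReal.ofReal (eucNorm η ^ 2) ∂ν) < ⊤) (C : ℝ) (hC : 0 ≤ C) :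
    IntegrableOn (fun η => C * eucNorm η ^ 2) (lsSmall d) ν := by
  constructor
  · exact (continuous_const.mul ((continuous_eucNorm).pow 2)).aestronglyMeasurable
  · rw [hasFiniteIntegral_iff_norm]
    calc (∫⁻ η in lsSmall d, ENNReal.ofReal ‖C * eucNorm η ^ 2‖ ∂ν)
        = ∫⁻ η in lsSmall d, ENNReal.ofReal C * ENNReal.ofReal (eucNorm η ^ 2) ∂ν := by
          apply lintegral_congr
          intro η
          rw [← ENNReal.ofReal_mul hC]
          congr 1
          rw [Real.norm_eq_abs, _root_.abs_of_nonneg (by positivity)]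
      _ = ENNReal.ofReal C * ∫⁻ η in lsSmall d, ENNReal.ofReal (eucNorm η ^ 2) ∂ν := by
          rw [lintegral_const_mul]
          exact ENNReal.measurable_ofReal.comp (continuous_eucNorm.pow 2).measurable
      _ < ⊤ := ENNReal.mul_lt_top ENNReal.ofReal_lt_top h1

private lemma integrable_lsBound {d : ℕ} {ν : Measure (Fin d → ℝ)}
    (h1 : (∫⁻ η in lsSmall d, ENNReal.ofReal (eucNorm η ^ 2) ∂ν) < ⊤)
    (h2 : ν (lsSmall d)ᶜ < ⊤) (C : ℝ) (hC : 0 ≤ C) :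
    Integrable (fun η => (lsSmall d).indicator (fun η' => C * eucNorm η' ^ 2) η
      + ((lsSmall d)ᶜ).indicator (fun _ => (2:ℝ)) η) ν := by
  apply Integrable.add
  · rw [integrable_indicator_iff measurableSet_lsSmall]
    exact integrable_sq_on_lsSmall h1 C hC
  · rw [integrable_indicator_iff measurableSet_lsSmall.compl]
    exact integrableOn_const h2.ne

private lemma continuous_levySymbol {d : ℕ} {ν : Measure (Fin d → ℝ)}
    (α : Fin d → ℝ) (A : Matrix (Fin d) (Fin d) ℝ)
    (h1 : (∫⁻ η in lsSmall d, ENNReal.ofReal (eucNorm η ^ 2) ∂ν) < ⊤)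
    (h2 : ν (lsSmall d)ᶜ < ⊤) :
    Continuous (levySymbol α A ν) := by
  have hG : Continuous (fun ξ : Fin d → ℝ => ∫ η, lsInt ξ η ∂ν) := by
    rw [continuous_iff_continuousAt]
    intro ξ₀
    set M : ℝ := eucNorm ξ₀ + 1 with hM
    have hM0 : 0 ≤ M := by have := eucNorm_nonneg ξ₀; linarith
    have hnb : ∀ᶠ ξ in nhds ξ₀, eucNorm ξ ≤ M := by
      have ho : IsOpen {ξ : Fin d → ℝ | eucNorm ξ < M} :=
        isOpen_lt continuous_eucNorm continuous_const
      filter_upwards [ho.mem_nhds (by simp [hM])] with ξ hξ using le_of_lt hξ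
    refine continuousAt_of_dominated (bound := fun η =>
        (lsSmall d).indicator (fun η' => ((d:ℝ)^2 * M^2) * eucNorm η' ^ 2) η
        + ((lsSmall d)ᶜ).indicator (fun _ => (2:ℝ)) η) ?_ ?_ ?_ ?_
    · exact Filter.Eventually.of_forall fun ξ => aesm_lsInt ν ξ
    · filter_upwards [hnb] with ξ hξ
      refine Filter.Eventually.of_forall fun η => ?_
      by_cases hη : η ∈ lsSmall d
      · rw [Set.indicator_of_mem hη, Set.indicator_of_notMem (by simpa using hη)]
        rw [add_zero]
        calc ‖lsInt ξ η‖ ≤ (d : ℝ)^2 * eucNorm ξ ^2 * eucNorm η ^2 := norm_lsInt_le_small ξ η hη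
          _ ≤ (d:ℝ)^2 * M^2 * eucNorm η ^2 := by
              have h3 := eucNorm_nonneg ξ
              gcongr
      · rw [Set.indicator_of_notMem hη, Set.indicator_of_mem (by simpa using hη), zero_add]
        exact le_trans (norm_lsInt_le_big ξ η hη) (min_le_left _ _)
    · exact integrable_lsBound h1 h2 _ (by positivity)
    · refine Filter.Eventually.of_forall fun η => ?_
      unfold lsInt
      by_cases hη : η ∈ lsSmall d
      · simp only [Set.indicator_of_mem hη]
        apply ContinuousAt.sub
        · apply ContinuousAt.sub
          · exact ((Complex.continuous_exp.comp (continuous_const.mul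
              (Complex.continuous_ofReal.comp (continuous_dotProduct_right η)))).continuousAt)
          · exact continuousAt_const
        · exact (continuous_const.mul (Complex.continuous_ofReal.comp
            (continuous_dotProduct_right η))).continuousAt
      · simp only [Set.indicator_of_notMem hη]
        apply ContinuousAt.sub
        · apply ContinuousAt.sub
          · exact ((Complex.continuous_exp.comp (continuous_const.mul
              (Complex.continuous_ofReal.comp (continuous_dotProduct_right η)))).continuousAt)
          · exact continuousAt_const
        · exact continuousAt_const
  have hrepr : levySymbol α A ν = fun ξ =>
      (Complex.I * ((α ⬝ᵥ ξ : ℝ) : ℂ) - (1 / 2 : ℂ) * ((ξ ⬝ᵥ (A.mulVec ξ) : ℝ) : ℂ))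
      + ∫ η, lsInt ξ η ∂ν := rfl
  rw [hrepr]
  apply Continuous.add
  · apply Continuous.sub
    · exact continuous_const.mul (Complex.continuous_ofReal.comp (continuous_dotProduct_right α))
    · refine continuous_const.mul (Complex.continuous_ofReal.comp ?_)
      have hq : Continuous fun ξ : Fin d → ℝ => ∑ i, ξ i * (∑ j, A i j * ξ j) :=
        continuous_finset_sum _ fun i _ => (continuous_apply i).mul
          (continuous_finset_sum _ fun j _ => continuous_const.mul (continuous_apply j))
      exact hq
  · exact hG

open Set in
private lemma tendsto_exp_neg_mul_atTop {c : ℝ} (hc : 0 < c) :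
    Tendsto (fun τ : ℝ => Real.exp (-c * τ)) atTop (nhds 0) := by
  have h1 : Tendsto (fun τ : ℝ => -c * τ) atTop atBot := by
    apply (tendsto_const_mul_atBot_of_neg (by linarith : -c < 0)).2 tendsto_id
  exact Real.tendsto_exp_atBot.comp h1

open Set in
private lemma integral_exp_neg_mul_Ioi {c T : ℝ} (hc : 0 < c) :
    ∫ τ in Ioi T, Real.exp (-c * τ) = Real.exp (-c * T) / c := by
  have hderiv : ∀ x ∈ Ici T, HasDerivAt (fun τ : ℝ => -Real.exp (-c * τ) / c)
      (Real.exp (-c * x)) x := by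
    intro x _
    have h1 : HasDerivAt (fun τ : ℝ => -c * τ) (-c) x := by
      simpa using (hasDerivAt_id x).const_mul (-c)
    have h3 := (h1.exp.neg).div_const c
    refine h3.congr_deriv ?_
    rw [div_eq_iff hc.ne']
    ring
  have h := integral_Ioi_of_hasDerivAt_of_tendsto' hderiv (exp_neg_integrableOn_Ioi T hc)
      (by simpa using (tendsto_exp_neg_mul_atTop hc).neg.div_const c)
  rw [h]; ring

open Set in
private lemma lintegral_exp_decay_lt_top {c K : ℝ} (hc : 0 < c) (hK : 0 ≤ K) :
    (∫⁻ τ in Ioi (0:ℝ), ENNReal.ofReal (K * Real.exp (-c * τ))) < ⊤ := by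
  have hi : IntegrableOn (fun τ => K * Real.exp (-c * τ)) (Ioi (0:ℝ)) :=
    (exp_neg_integrableOn_Ioi 0 hc).const_mul K
  exact (hasFiniteIntegral_iff_ofReal (ae_of_all _ fun τ => by positivity)).1 hi.2

open Set in
private lemma lintegral_min_exp_le {c : ℝ} (hc : 0 < c) (M : ℝ) (hM : 0 ≤ M) :
    (∫⁻ τ in Ioi (0:ℝ), ENNReal.ofReal (min 2 (M * Real.exp (-c * τ))))
      ≤ ENNReal.ofReal (2 * (max 0 (Real.log M) / c) + 1 / c) := by
  set T : ℝ := max 0 (Real.log M) / c with hTdef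
  have hT : 0 ≤ T := div_nonneg (le_max_left _ _) hc.le
  have hcT : c * T = max 0 (Real.log M) := by rw [hTdef]; field_simp
  have hMe : M ≤ Real.exp (c * T) := by
    rcases eq_or_lt_of_le hM with h | h
    · rw [← h]; exact (Real.exp_pos _).le
    · calc M = Real.exp (Real.log M) := (Real.exp_log h).symm
        _ ≤ Real.exp (c * T) := Real.exp_le_exp.2 (by rw [hcT]; exact le_max_right _ _)
  rw [← Ioc_union_Ioi_eq_Ioi hT, lintegral_union measurableSet_Ioi (Ioc_disjoint_Ioi le_rfl)]
  have part1 : (∫⁻ τ in Ioc (0:ℝ) T, ENNReal.ofReal (min 2 (M * Real.exp (-c * τ))))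
      ≤ ENNReal.ofReal (2 * T) := by
    calc (∫⁻ τ in Ioc (0:ℝ) T, ENNReal.ofReal (min 2 (M * Real.exp (-c * τ))))
        ≤ ∫⁻ _ in Ioc (0:ℝ) T, (ENNReal.ofReal 2) :=
          lintegral_mono fun τ => ENNReal.ofReal_le_ofReal (min_le_left _ _)
      _ = ENNReal.ofReal 2 * volume (Ioc (0:ℝ) T) := setLIntegral_const _ _
      _ = ENNReal.ofReal 2 * ENNReal.ofReal (T - 0) := by rw [Real.volume_Ioc]
      _ = ENNReal.ofReal (2 * T) := by rw [sub_zero, ← ENNReal.ofReal_mul (by norm_num)]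
  have part2 : (∫⁻ τ in Ioi T, ENNReal.ofReal (min 2 (M * Real.exp (-c * τ))))
      ≤ ENNReal.ofReal (1 / c) := by
    calc (∫⁻ τ in Ioi T, ENNReal.ofReal (min 2 (M * Real.exp (-c * τ))))
        ≤ ∫⁻ τ in Ioi T, ENNReal.ofReal (Real.exp (c * T) * Real.exp (-c * τ)) := by
          refine lintegral_mono fun τ => ENNReal.ofReal_le_ofReal ?_
          exact le_trans (min_le_right _ _)
            (mul_le_mul_of_nonneg_right hMe (Real.exp_pos _).le)
      _ = ENNReal.ofReal (∫ τ in Ioi T, Real.exp (c * T) * Real.exp (-c * τ)) := by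
          rw [← ofReal_integral_eq_lintegral_ofReal
            ((exp_neg_integrableOn_Ioi T hc).const_mul _)
            (ae_of_all _ fun τ => by positivity)]
      _ = ENNReal.ofReal (1 / c) := by
          rw [MeasureTheory.integral_const_mul, integral_exp_neg_mul_Ioi hc]
          congr 1
          rw [neg_mul, Real.exp_neg]
          field_simp
  calc _ ≤ ENNReal.ofReal (2 * T) + ENNReal.ofReal (1 / c) := add_le_add part1 part2
    _ = ENNReal.ofReal (2 * T + 1 / c) := by
        rw [← ENNReal.ofReal_add (by positivity) (by positivity)]
    _ = _ := rfl

open Set in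
private lemma tail_lintegral_lt_top {d : ℕ} {ν : Measure (Fin d → ℝ)} {c : ℝ} (hc : 0 < c)
    (hbig : ν (lsSmall d)ᶜ < ⊤)
    (hlog : (∫⁻ η in {η : Fin d → ℝ | 1 < eucNorm η},
      ENNReal.ofReal (Real.log (eucNorm η)) ∂ν) < ⊤)
    (a : ℝ) (ha : 0 ≤ a) :
    (∫⁻ τ in Ioi (0:ℝ), ∫⁻ η in (lsSmall d)ᶜ,
      ENNReal.ofReal (min 2 (a * eucNorm η * Real.exp (-c * τ))) ∂ν) < ⊤ := by
  haveI : IsFiniteMeasure (ν.restrict (lsSmall d)ᶜ) :=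
    ⟨by rwa [Measure.restrict_apply_univ]⟩
  rw [lintegral_lintegral_swap]
  swap
  · apply Measurable.aemeasurable
    apply Measurable.ennreal_ofReal
    apply Measurable.min measurable_const
    exact (((continuous_eucNorm.measurable.comp measurable_snd).const_mul a).mul
      (Real.measurable_exp.comp (measurable_fst.const_mul (-c))))
  · have hbd : ∀ η ∈ (lsSmall d)ᶜ,
        (∫⁻ τ in Ioi (0:ℝ), ENNReal.ofReal (min 2 (a * eucNorm η * Real.exp (-c * τ))))
        ≤ ENNReal.ofReal (2 / c * Real.log (eucNorm η))
          + ENNReal.ofReal (2 * (max 0 (Real.log a) / c) + 1 / c) := by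
      intro η hη
      have hη1 : 1 ≤ eucNorm η := by rwa [lsSmall_compl] at hη
      have hlog0 : 0 ≤ Real.log (eucNorm η) := Real.log_nonneg hη1
      refine le_trans (lintegral_min_exp_le hc _ (by positivity)) ?_
      rw [← ENNReal.ofReal_add (by positivity) (by positivity)]
      apply ENNReal.ofReal_le_ofReal
      have hmax : max 0 (Real.log (a * eucNorm η))
          ≤ Real.log (eucNorm η) + max 0 (Real.log a) := by
        rcases eq_or_lt_of_le ha with h | h
        · rw [← h, zero_mul, Real.log_zero, max_self]
          positivity
        · rw [Real.log_mul (ne_of_gt h) (by linarith)]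
          rcases le_or_gt (Real.log a + Real.log (eucNorm η)) 0 with h2 | h2
          · rw [max_eq_left h2]; positivity
          · rw [max_eq_right h2.le]
            have : Real.log a ≤ max 0 (Real.log a) := le_max_right _ _
            linarith
      calc 2 * (max 0 (Real.log (a * eucNorm η)) / c) + 1 / c
          ≤ 2 * ((Real.log (eucNorm η) + max 0 (Real.log a)) / c) + 1 / c := by
            have h5 : max 0 (Real.log (a * eucNorm η)) / c
                ≤ (Real.log (eucNorm η) + max 0 (Real.log a)) / c :=
              div_le_div_of_nonneg_right hmax hc.le
            linarith
        _ = 2 / c * Real.log (eucNorm η) + (2 * (max 0 (Real.log a) / c) + 1 / c) := by ring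
    calc (∫⁻ η in (lsSmall d)ᶜ, ∫⁻ τ in Ioi (0:ℝ),
            ENNReal.ofReal (min 2 (a * eucNorm η * Real.exp (-c * τ))) ∂volume ∂ν)
        ≤ ∫⁻ η in (lsSmall d)ᶜ, (ENNReal.ofReal (2 / c * Real.log (eucNorm η))
          + ENNReal.ofReal (2 * (max 0 (Real.log a) / c) + 1 / c)) ∂ν := by
          apply setLIntegral_mono' measurableSet_lsSmall.compl hbd
      _ = (∫⁻ η in (lsSmall d)ᶜ, ENNReal.ofReal (2 / c * Real.log (eucNorm η)) ∂ν)
          + ENNReal.ofReal (2 * (max 0 (Real.log a) / c) + 1 / c) * ν (lsSmall d)ᶜ := by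
          rw [lintegral_add_right _ measurable_const, setLIntegral_const]
      _ < ⊤ := by
          apply ENNReal.add_lt_top.2
          constructor
          · have heq : ∀ η : Fin d → ℝ, ENNReal.ofReal (2 / c * Real.log (eucNorm η))
                = ENNReal.ofReal (2 / c) * ENNReal.ofReal (Real.log (eucNorm η)) := fun η =>
              ENNReal.ofReal_mul (by positivity)
            simp_rw [heq]
            rw [lintegral_const_mul (μ := ν.restrict (lsSmall d)ᶜ) (ENNReal.ofReal (2 / c))
              (f := fun η => ENNReal.ofReal (Real.log (eucNorm η)))
              (ENNReal.measurable_ofReal.comp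
                (Real.measurable_log.comp continuous_eucNorm.measurable))]
            apply ENNReal.mul_lt_top ENNReal.ofReal_lt_top
            calc (∫⁻ η in (lsSmall d)ᶜ, ENNReal.ofReal (Real.log (eucNorm η)) ∂ν)
                ≤ ∫⁻ η in {η : Fin d → ℝ | 1 < eucNorm η} ∪ {η : Fin d → ℝ | eucNorm η = 1},
                  ENNReal.ofReal (Real.log (eucNorm η)) ∂ν := by
                  apply lintegral_mono_set
                  rw [lsSmall_compl]
                  intro η hη
                  have hη' : 1 ≤ eucNorm η := hη
                  rcases lt_or_eq_of_le hη' with h | h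
                  · exact Or.inl h
                  · exact Or.inr h.symm
              _ ≤ (∫⁻ η in {η : Fin d → ℝ | 1 < eucNorm η},
                    ENNReal.ofReal (Real.log (eucNorm η)) ∂ν)
                  + ∫⁻ η in {η : Fin d → ℝ | eucNorm η = 1},
                    ENNReal.ofReal (Real.log (eucNorm η)) ∂ν := lintegral_union_le _ _ _
              _ < ⊤ := by
                  apply ENNReal.add_lt_top.2
                  refine ⟨hlog, ?_⟩
                  have hz : (∫⁻ η in {η : Fin d → ℝ | eucNorm η = 1},
                      ENNReal.ofReal (Real.log (eucNorm η)) ∂ν) = 0 := by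
                    rw [setLIntegral_congr_fun
                      (measurableSet_eq_fun continuous_eucNorm.measurable measurable_const)
                      (fun η (hη : eucNorm η = 1) => by
                        rw [hη, Real.log_one, ENNReal.ofReal_zero])]
                    exact lintegral_zero
                  rw [hz]
                  exact ENNReal.zero_lt_top
          · exact ENNReal.mul_lt_top ENNReal.ofReal_lt_top hbig

private lemma ofReal_norm_levySymbol_le {d : ℕ} (α : Fin d → ℝ) (A : Matrix (Fin d) (Fin d) ℝ)
    (ν : Measure (Fin d → ℝ)) (ζ : Fin d → ℝ) :
    ENNReal.ofReal ‖levySymbol α A ν ζ‖ ≤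
      ENNReal.ofReal ((d : ℝ) * eucNorm α * eucNorm ζ)
      + ENNReal.ofReal ((1/2) * (∑ i, ∑ j, |A i j|) * eucNorm ζ ^ 2)
      + (ENNReal.ofReal ((d:ℝ)^2 * eucNorm ζ^2)
          * ∫⁻ η in lsSmall d, ENNReal.ofReal (eucNorm η ^ 2) ∂ν)
      + ∫⁻ η in (lsSmall d)ᶜ, ENNReal.ofReal (min 2 ((d:ℝ) * eucNorm η * eucNorm ζ)) ∂ν := by
  have hnorm : ‖levySymbol α A ν ζ‖ ≤ (d : ℝ) * eucNorm α * eucNorm ζ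
      + (1/2) * (∑ i, ∑ j, |A i j|) * eucNorm ζ ^ 2 + ‖∫ η, lsInt ζ η ∂ν‖ := by
    have h0 : levySymbol α A ν ζ = (Complex.I * ((α ⬝ᵥ ζ : ℝ) : ℂ)
        - (1 / 2 : ℂ) * ((ζ ⬝ᵥ (A.mulVec ζ) : ℝ) : ℂ)) + ∫ η, lsInt ζ η ∂ν := rfl
    rw [h0]
    refine le_trans (norm_add_le _ _) ?_
    apply add_le_add_left
    refine le_trans (norm_sub_le _ _) ?_
    apply add_le_add
    · rw [norm_mul, Complex.norm_I, one_mul, Complex.norm_real, Real.norm_eq_abs]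
      exact abs_dotProduct_le α ζ
    · rw [norm_mul, Complex.norm_real, Real.norm_eq_abs]
      have h12 : ‖(1/2 : ℂ)‖ = 1/2 := by norm_num
      rw [h12, mul_assoc]
      exact mul_le_mul_of_nonneg_left (abs_dotProduct_mulVec_le ζ A) (by norm_num)
  calc ENNReal.ofReal ‖levySymbol α A ν ζ‖
      ≤ ENNReal.ofReal ((d : ℝ) * eucNorm α * eucNorm ζ
        + (1/2) * (∑ i, ∑ j, |A i j|) * eucNorm ζ ^ 2 + ‖∫ η, lsInt ζ η ∂ν‖) :=
        ENNReal.ofReal_le_ofReal hnorm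
    _ ≤ ENNReal.ofReal ((d : ℝ) * eucNorm α * eucNorm ζ
        + (1/2) * (∑ i, ∑ j, |A i j|) * eucNorm ζ ^ 2)
        + ENNReal.ofReal ‖∫ η, lsInt ζ η ∂ν‖ := ENNReal.ofReal_add_le
    _ ≤ ENNReal.ofReal ((d : ℝ) * eucNorm α * eucNorm ζ)
        + ENNReal.ofReal ((1/2) * (∑ i, ∑ j, |A i j|) * eucNorm ζ ^ 2)
        + ENNReal.ofReal ‖∫ η, lsInt ζ η ∂ν‖ :=
        add_le_add_left ENNReal.ofReal_add_le _
    _ ≤ _ := by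
        refine le_trans (add_le_add_right ?_ _) (le_of_eq (add_assoc _ _ _).symm)
        calc ENNReal.ofReal ‖∫ η, lsInt ζ η ∂ν‖
            ≤ ∫⁻ η, ENNReal.ofReal ‖lsInt ζ η‖ ∂ν := by
              refine le_trans (ENNReal.ofReal_le_ofReal (norm_integral_le_lintegral_norm _)) ?_
              exact ENNReal.ofReal_toReal_le
          _ = (∫⁻ η in lsSmall d, ENNReal.ofReal ‖lsInt ζ η‖ ∂ν)
              + ∫⁻ η in (lsSmall d)ᶜ, ENNReal.ofReal ‖lsInt ζ η‖ ∂ν :=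
              (lintegral_add_compl _ measurableSet_lsSmall).symm
          _ ≤ (ENNReal.ofReal ((d:ℝ)^2 * eucNorm ζ^2)
                * ∫⁻ η in lsSmall d, ENNReal.ofReal (eucNorm η ^ 2) ∂ν)
              + ∫⁻ η in (lsSmall d)ᶜ,
                  ENNReal.ofReal (min 2 ((d:ℝ) * eucNorm η * eucNorm ζ)) ∂ν := by
              apply add_le_add
              · rw [← lintegral_const_mul (μ := ν.restrict (lsSmall d))
                  (ENNReal.ofReal ((d:ℝ)^2 * eucNorm ζ^2))
                  (f := fun η => ENNReal.ofReal (eucNorm η ^ 2))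
                  (ENNReal.measurable_ofReal.comp ((continuous_eucNorm.pow 2).measurable))]
                refine setLIntegral_mono' measurableSet_lsSmall fun η hη => ?_
                rw [← ENNReal.ofReal_mul (by positivity)]
                refine ENNReal.ofReal_le_ofReal ?_
                calc ‖lsInt ζ η‖ ≤ (d : ℝ)^2 * eucNorm ζ ^2 * eucNorm η ^2 :=
                      norm_lsInt_le_small ζ η hη
                  _ = (d:ℝ)^2 * eucNorm ζ^2 * eucNorm η ^ 2 := by ring
              · refine setLIntegral_mono' measurableSet_lsSmall.compl fun η hη => ?_
                exact ENNReal.ofReal_le_ofReal (norm_lsInt_le_big ζ η hη)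

attribute [local instance] Matrix.linftyOpNormedRing Matrix.linftyOpNormedAlgebra

private lemma continuous_expm_mulVec {d : ℕ} (Z : Matrix (Fin d) (Fin d) ℝ) (ξ : Fin d → ℝ) :
    Continuous fun τ : ℝ => (expm Z τ).mulVec ξ := by
  have h1 : Continuous fun τ : ℝ => expm Z τ :=
    NormedSpace.exp_continuous.comp (continuous_id.smul continuous_const)
  refine continuous_pi fun i => ?_
  have h2 : Continuous fun M : Matrix (Fin d) (Fin d) ℝ => M.mulVec ξ i := by
    unfold Matrix.mulVec dotProduct
    beta_reduce
    exact continuous_finset_sum _ fun j _ => by fun_prop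
  exact h2.comp h1

private lemma charFun_zero_eq_one {d : ℕ} (μ₀ : Measure (Fin d → ℝ))
    [IsProbabilityMeasure μ₀] : charFun μ₀ 0 = 1 := by
  unfold _root_.charFun
  simp [dotProduct_zero]

private lemma continuous_charFun {d : ℕ} (μ₀ : Measure (Fin d → ℝ)) [IsFiniteMeasure μ₀] :
    Continuous (charFun μ₀) := by
  rw [continuous_iff_continuousAt]
  intro ξ₀
  refine continuousAt_of_dominated (bound := fun _ => (1:ℝ)) ?_ ?_ ?_ ?_
  · exact Filter.Eventually.of_forall fun ξ =>
      (Complex.continuous_exp.comp (continuous_const.mul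
        (Complex.continuous_ofReal.comp (continuous_dotProduct_left ξ)))).aestronglyMeasurable
  · refine Filter.Eventually.of_forall fun ξ => ae_of_all _ fun x => ?_
    rw [mul_comm Complex.I, Complex.norm_exp_ofReal_mul_I]
  · exact integrable_const 1
  · exact Filter.Eventually.of_forall fun x =>
      (Complex.continuous_exp.comp (continuous_const.mul
        (Complex.continuous_ofReal.comp (continuous_dotProduct_right x)))).continuousAt


/-- approach to equilibrium — for any initial probability measure `μ₀`,
`exp(∫₀ᵗ ψ(S_τ ξ) dτ) · charFun(μ₀)(S_t ξ)` converges, as `t → ∞`, to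
`exp(∫₀^∞ ψ(S_τ ξ) dτ)`, independently of `μ₀`. -/
theorem stmt17 (d : ℕ) (hd : 0 < d) (Z : Matrix (Fin d) (Fin d) ℝ)
    (c : ℝ) (hc : 0 < c)
    (hcontr : ∀ t : ℝ, 0 ≤ t → ∀ ξ : Fin d → ℝ,
      eucNorm ((expm Z t).mulVec ξ) ≤ Real.exp (-c * t) * eucNorm ξ)
    (α : Fin d → ℝ) (A : Matrix (Fin d) (Fin d) ℝ) (hA : A.IsSymm) (hApsd : A.PosSemidef)
    (ν : Measure (Fin d → ℝ)) (hν : IsLevyMeasure ν)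
    (hlog : (∫⁻ η in {η : Fin d → ℝ | 1 < eucNorm η},
      ENNReal.ofReal (Real.log (eucNorm η)) ∂ν) < ⊤)
    (μ₀ : Measure (Fin d → ℝ)) (hμ₀ : IsProbabilityMeasure μ₀) :
    ∀ ξ : Fin d → ℝ,
      Tendsto (fun t : ℝ =>
          Complex.exp (∫ τ in (0:ℝ)..t, levySymbol α A ν ((expm Z τ).mulVec ξ)) *
            charFun μ₀ ((expm Z t).mulVec ξ))
        atTop
        (nhds (Complex.exp (∫ τ in Set.Ici (0:ℝ),
          levySymbol α A ν ((expm Z τ).mulVec ξ)))) := by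
  haveI := hμ₀
  obtain ⟨hν0, hsmall, hbig'⟩ := hν
  have hbig : ν (lsSmall d)ᶜ < ⊤ := by rw [lsSmall_compl]; exact hbig'
  have hsmall' : (∫⁻ η in lsSmall d, ENNReal.ofReal (eucNorm η ^ 2) ∂ν) < ⊤ := hsmall
  intro ξ
  set R := eucNorm ξ with hR
  have hR0 : 0 ≤ R := eucNorm_nonneg ξ
  set f : ℝ → ℂ := fun τ => levySymbol α A ν ((expm Z τ).mulVec ξ) with hf
  have hScont : Continuous fun τ : ℝ => (expm Z τ).mulVec ξ := continuous_expm_mulVec Z ξ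
  have hfc : Continuous f := (continuous_levySymbol α A hsmall' hbig).comp hScont
  have hA0 : (0:ℝ) ≤ ∑ i, ∑ j, |A i j| :=
    Finset.sum_nonneg fun i _ => Finset.sum_nonneg fun j _ => abs_nonneg _
  have hint : IntegrableOn f (Set.Ioi (0:ℝ)) := by
    constructor
    · exact hfc.aestronglyMeasurable.restrict
    · rw [hasFiniteIntegral_iff_norm]
      have hpt : ∀ τ ∈ Set.Ioi (0:ℝ), ENNReal.ofReal ‖f τ‖ ≤
          ENNReal.ofReal (((d:ℝ) * eucNorm α) * (Real.exp (-c*τ) * R))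
          + ENNReal.ofReal (((1/2) * (∑ i, ∑ j, |A i j|)) * (Real.exp (-c*τ) * R)^2)
          + ENNReal.ofReal ((d:ℝ)^2 * (Real.exp (-c*τ) * R)^2)
              * ∫⁻ η in lsSmall d, ENNReal.ofReal (eucNorm η ^ 2) ∂ν
          + ∫⁻ η in (lsSmall d)ᶜ,
              ENNReal.ofReal (min 2 (((d:ℝ)*R) * eucNorm η * Real.exp (-c*τ))) ∂ν := by
        intro τ hτ
        have hζ : eucNorm ((expm Z τ).mulVec ξ) ≤ Real.exp (-c*τ) * R :=
          hcontr τ (le_of_lt hτ) ξ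
        have hζ0 : 0 ≤ eucNorm ((expm Z τ).mulVec ξ) := eucNorm_nonneg _
        refine le_trans (ofReal_norm_levySymbol_le α A ν ((expm Z τ).mulVec ξ)) ?_
        refine add_le_add (add_le_add (add_le_add ?_ ?_) ?_) ?_
        · refine ENNReal.ofReal_le_ofReal ?_
          refine mul_le_mul_of_nonneg_left hζ ?_
          have := eucNorm_nonneg α
          positivity
        · refine ENNReal.ofReal_le_ofReal ?_
          refine mul_le_mul_of_nonneg_left (pow_le_pow_left₀ hζ0 hζ 2) ?_
          exact mul_nonneg (by norm_num) hA0
        · refine mul_le_mul_left (ENNReal.ofReal_le_ofReal ?_) _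
          exact mul_le_mul_of_nonneg_left (pow_le_pow_left₀ hζ0 hζ 2) (by positivity)
        · refine setLIntegral_mono' measurableSet_lsSmall.compl fun η hη => ?_
          refine ENNReal.ofReal_le_ofReal (min_le_min le_rfl ?_)
          calc (d:ℝ) * eucNorm η * eucNorm ((expm Z τ).mulVec ξ)
              ≤ (d:ℝ) * eucNorm η * (Real.exp (-c*τ) * R) := by
                refine mul_le_mul_of_nonneg_left hζ ?_
                have := eucNorm_nonneg η
                positivity
            _ = ((d:ℝ)*R) * eucNorm η * Real.exp (-c*τ) := by ring
      have hm1 : Measurable fun τ : ℝ =>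
          ENNReal.ofReal (((d:ℝ) * eucNorm α) * (Real.exp (-c*τ) * R)) := by
        apply Measurable.ennreal_ofReal
        exact ((Real.measurable_exp.comp (measurable_id.const_mul (-c))).mul_const R).const_mul _
      have hm2 : Measurable fun τ : ℝ =>
          ENNReal.ofReal (((1/2) * (∑ i, ∑ j, |A i j|)) * (Real.exp (-c*τ) * R)^2) := by
        apply Measurable.ennreal_ofReal
        exact (((Real.measurable_exp.comp (measurable_id.const_mul (-c))).mul_const R).pow_const
          2).const_mul _
      have hm3 : Measurable fun τ : ℝ =>
          ENNReal.ofReal ((d:ℝ)^2 * (Real.exp (-c*τ) * R)^2)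
            * ∫⁻ η in lsSmall d, ENNReal.ofReal (eucNorm η ^ 2) ∂ν := by
        apply Measurable.mul_const
        apply Measurable.ennreal_ofReal
        exact (((Real.measurable_exp.comp (measurable_id.const_mul (-c))).mul_const R).pow_const
          2).const_mul _
      calc (∫⁻ τ in Set.Ioi (0:ℝ), ENNReal.ofReal ‖f τ‖)
          ≤ ∫⁻ τ in Set.Ioi (0:ℝ),
            (ENNReal.ofReal (((d:ℝ) * eucNorm α) * (Real.exp (-c*τ) * R))
            + ENNReal.ofReal (((1/2) * (∑ i, ∑ j, |A i j|)) * (Real.exp (-c*τ) * R)^2)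
            + ENNReal.ofReal ((d:ℝ)^2 * (Real.exp (-c*τ) * R)^2)
                * ∫⁻ η in lsSmall d, ENNReal.ofReal (eucNorm η ^ 2) ∂ν
            + ∫⁻ η in (lsSmall d)ᶜ,
                ENNReal.ofReal (min 2 (((d:ℝ)*R) * eucNorm η * Real.exp (-c*τ))) ∂ν) :=
            setLIntegral_mono' measurableSet_Ioi hpt
        _ = (∫⁻ τ in Set.Ioi (0:ℝ),
              ENNReal.ofReal (((d:ℝ) * eucNorm α) * (Real.exp (-c*τ) * R)))
            + (∫⁻ τ in Set.Ioi (0:ℝ),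
              ENNReal.ofReal (((1/2) * (∑ i, ∑ j, |A i j|)) * (Real.exp (-c*τ) * R)^2))
            + (∫⁻ τ in Set.Ioi (0:ℝ), ENNReal.ofReal ((d:ℝ)^2 * (Real.exp (-c*τ) * R)^2)
                * ∫⁻ η in lsSmall d, ENNReal.ofReal (eucNorm η ^ 2) ∂ν)
            + ∫⁻ τ in Set.Ioi (0:ℝ), ∫⁻ η in (lsSmall d)ᶜ,
                ENNReal.ofReal (min 2 (((d:ℝ)*R) * eucNorm η * Real.exp (-c*τ))) ∂ν := by
            rw [lintegral_add_left ?_,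
              lintegral_add_left ?_, lintegral_add_left hm1]
            · exact hm1.add hm2
            · exact (hm1.add hm2).add hm3
        _ < ⊤ := by
            refine ENNReal.add_lt_top.2 ⟨ENNReal.add_lt_top.2 ⟨ENNReal.add_lt_top.2 ⟨?_, ?_⟩, ?_⟩, ?_⟩
            · have he : ∀ τ : ℝ, ((d:ℝ) * eucNorm α) * (Real.exp (-c*τ) * R)
                  = ((d:ℝ) * eucNorm α * R) * Real.exp (-c*τ) := fun τ => by ring
              simp_rw [he]
              exact lintegral_exp_decay_lt_top hc
                (by have := eucNorm_nonneg α; positivity)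
            · have he : ∀ τ : ℝ, ((1/2) * (∑ i, ∑ j, |A i j|)) * (Real.exp (-c*τ) * R)^2
                  = ((1/2) * (∑ i, ∑ j, |A i j|) * R^2) * Real.exp (-(2*c)*τ) := by
                intro τ
                rw [mul_pow, pow_two (Real.exp (-c*τ)), ← Real.exp_add,
                  show -c*τ + -c*τ = -(2*c)*τ from by ring]
                ring
              simp_rw [he]
              exact lintegral_exp_decay_lt_top (by linarith)
                (by positivity)
            · rw [lintegral_mul_const _ (by
                apply Measurable.ennreal_ofReal
                exact (((Real.measurable_exp.comp (measurable_id.const_mul (-c))).mul_const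
                  R).pow_const 2).const_mul _)]
              refine ENNReal.mul_lt_top ?_ hsmall'
              have he : ∀ τ : ℝ, (d:ℝ)^2 * (Real.exp (-c*τ) * R)^2
                  = ((d:ℝ)^2 * R^2) * Real.exp (-(2*c)*τ) := by
                intro τ
                rw [mul_pow, pow_two (Real.exp (-c*τ)), ← Real.exp_add,
                  show -c*τ + -c*τ = -(2*c)*τ from by ring]
                ring
              simp_rw [he]
              exact lintegral_exp_decay_lt_top (by linarith) (by positivity)
            · exact tail_lintegral_lt_top hc hbig hlog ((d:ℝ)*R) (by positivity)
  have h3 := intervalIntegral_tendsto_integral_Ioi 0 hint tendsto_id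
  have h4 : Tendsto (fun t : ℝ => Complex.exp (∫ τ in (0:ℝ)..t, f τ)) atTop
      (nhds (Complex.exp (∫ τ in Set.Ioi (0:ℝ), f τ))) :=
    (Complex.continuous_exp.tendsto _).comp h3
  have h5 : Tendsto (fun t : ℝ => (expm Z t).mulVec ξ) atTop (nhds 0) := by
    rw [tendsto_pi_nhds]
    intro i
    have hb : ∀ᶠ t : ℝ in atTop, ‖(expm Z t).mulVec ξ i‖ ≤ Real.exp (-c*t) * R := by
      filter_upwards [Filter.eventually_ge_atTop (0:ℝ)] with t ht
      exact le_trans (abs_apply_le_eucNorm _ i) (hcontr t ht ξ)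
    have hg : Tendsto (fun t : ℝ => Real.exp (-c*t) * R) atTop (nhds 0) := by
      simpa using (tendsto_exp_neg_mul_atTop hc).mul_const R
    simpa using squeeze_zero_norm' hb hg
  have h6 : Tendsto (fun t : ℝ => charFun μ₀ ((expm Z t).mulVec ξ)) atTop (nhds 1) := by
    have h7 := ((continuous_charFun μ₀).tendsto 0).comp h5
    rwa [charFun_zero_eq_one μ₀] at h7
  have h8 := h4.mul h6
  rw [mul_one] at h8
  rw [show (∫ τ in Set.Ici (0:ℝ), levySymbol α A ν ((expm Z τ).mulVec ξ))
    = ∫ τ in Set.Ioi (0:ℝ), f τ from MeasureTheory.integral_Ici_eq_integral_Ioi]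
  exact h8
end
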